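/- arXiv:1509.02086 — 4 statements merged into one kernel-verified Lean document; each statement's English description precedes it below -/
import Mathlib

section
/- Consider a chemical reaction network with matrices A, B ∈ ℤ≥0^{n×ν}, Γ = B − A, such that ker Γ contains a strictly positive vector (assumption AG). Suppose the network has a critical deadlock: a nonempty set P of species such that every reaction j has a reactant in P (for every j there exists i ∈ P with α_{ij} > 0), and P does not contain the support of any nonzero nonnegative λ ∈ ℝⁿ with λᵀΓ = 0. Then the network admits no convex piecewise-linear-in-rates robust Lyapunov function: there exists no matrix C ∈ ℝ^{q×ν} with ker C = ker Γ such that for every admissible kinetics R ∈ K_A and every x ∈ ℝ≥0ⁿ, the upper Dini derivative of x ↦ ‖C R(x)‖_∞ along the vector field x ↦ ΓR(x) is nonpositive. -/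
open Filter Set Topology

/-- Partial derivative ∂R_j/∂x_i at x. -/
noncomputable def pd {n ν : ℕ} (R : (Fin n → ℝ) → Fin ν → ℝ)
    (x : Fin n → ℝ) (j : Fin ν) (i : Fin n) : ℝ :=
  fderiv ℝ (fun y => R y j) x (Pi.single i 1)

/-- Admissible kinetics (A1)-(A4) for a reactant matrix `A`. -/
structure IsAdmissible {n ν : ℕ} (A : Matrix (Fin n) (Fin ν) ℕ)
    (R : (Fin n → ℝ) → Fin ν → ℝ) : Prop where
  smooth : ContDiff ℝ 1 R
  nonneg : ∀ x, (∀ i, 0 ≤ x i) → ∀ j, 0 ≤ R x j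
  vanish : ∀ x, (∀ i, 0 ≤ x i) → ∀ i j, 0 < A i j → x i = 0 → R x j = 0
  deriv_nonneg : ∀ x, (∀ i, 0 ≤ x i) → ∀ i j, 0 < A i j → 0 ≤ pd R x j i
  deriv_zero : ∀ x, (∀ i, 0 ≤ x i) → ∀ i j, A i j = 0 → pd R x j i = 0
  deriv_pos : ∀ x, (∀ i, 0 < x i) → ∀ i j, 0 < A i j → 0 < pd R x j i

/-- Upper (right) Dini derivative of `V` along the vector field `f` at `x`,
`D⁺V(x) = limsup_{h→0⁺} (V(x + h f(x)) − V(x))/h`. -/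
noncomputable def dini {m : ℕ} (V : (Fin m → ℝ) → ℝ)
    (f : (Fin m → ℝ) → (Fin m → ℝ)) (x : Fin m → ℝ) : ℝ :=
  Filter.limsup (fun h : ℝ => (V (x + h • f x) - V x) / h) (nhdsWithin 0 (Set.Ioi 0))

/-- The rank-one matrix `Γ^ℓ = e_j γ_iᵀ ∈ ℝ^{ν×ν}`. -/
noncomputable def GammaEll {n ν : ℕ} (Γ : Matrix (Fin n) (Fin ν) ℝ) (i : Fin n) (j : Fin ν) :
    Matrix (Fin ν) (Fin ν) ℝ :=
  Matrix.vecMulVec (Pi.single j 1) (fun k => Γ i k)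

section aux
variable {n : ℕ}

private noncomputable def Lrho (ρ : Fin n → ℝ) : (Fin n → ℝ) →L[ℝ] ℝ :=
  ∑ i, ρ i • (ContinuousLinearMap.proj i : (Fin n → ℝ) →L[ℝ] ℝ)

private noncomputable def Pder (S : Finset (Fin n)) (x : Fin n → ℝ) : (Fin n → ℝ) →L[ℝ] ℝ :=
  ∑ i ∈ S, (∏ j ∈ S.erase i, x j) • (ContinuousLinearMap.proj i : (Fin n → ℝ) →L[ℝ] ℝ)

private lemma Lrho_apply (ρ : Fin n → ℝ) (w : Fin n → ℝ) : Lrho ρ w = ∑ i, ρ i * w i := by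
  simp [Lrho, ContinuousLinearMap.sum_apply]

private lemma Pder_apply (S : Finset (Fin n)) (x w : Fin n → ℝ) :
    Pder S x w = ∑ i ∈ S, (∏ j ∈ S.erase i, x j) * w i := by
  simp [Pder, ContinuousLinearMap.sum_apply]

private noncomputable def kin (c : ℝ) (S : Finset (Fin n)) (ρ : Fin n → ℝ) (y : Fin n → ℝ) : ℝ :=
  c * ((∏ i ∈ S, y i) * Real.exp (∑ i, ρ i * (y i - 1)))

private noncomputable def kinD (c : ℝ) (S : Finset (Fin n)) (ρ : Fin n → ℝ) (x : Fin n → ℝ) :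
    (Fin n → ℝ) →L[ℝ] ℝ :=
  c • ((∏ i ∈ S, x i) • (Real.exp (∑ i, ρ i * (x i - 1)) • Lrho ρ)
      + Real.exp (∑ i, ρ i * (x i - 1)) • Pder S x)

private lemma kin_hasFDerivAt (c : ℝ) (S : Finset (Fin n)) (ρ : Fin n → ℝ) (x : Fin n → ℝ) :
    HasFDerivAt (kin c S ρ) (kinD c S ρ x) x := by
  classical
  have hP : HasFDerivAt (fun y : Fin n → ℝ => ∏ i ∈ S, y i) (Pder S x) x := by
    have := HasFDerivAt.finset_prod (u := S) (g := fun i (y : Fin n → ℝ) => y i)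
      (g' := fun i => (ContinuousLinearMap.proj i : (Fin n → ℝ) →L[ℝ] ℝ))
      (x := x) (fun i _ => hasFDerivAt_apply i x)
    exact this
  have hl : HasFDerivAt (fun y : Fin n → ℝ => ∑ i, ρ i * (y i - 1)) (Lrho ρ) x := by
    have := HasFDerivAt.fun_sum (u := Finset.univ)
      (A := fun i (y : Fin n → ℝ) => ρ i * (y i - 1))
      (A' := fun i => ρ i • (ContinuousLinearMap.proj i : (Fin n → ℝ) →L[ℝ] ℝ))
      (x := x)
      (fun i _ => ((hasFDerivAt_apply i x).sub_const 1).const_mul (ρ i))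
    exact this
  have hE := hl.exp
  have := (hP.mul hE).const_mul c
  exact this

private lemma kin_deriv_apply (c : ℝ) (S : Finset (Fin n)) (ρ : Fin n → ℝ) (x w : Fin n → ℝ) :
    kinD c S ρ x w =
      c * ((∏ i ∈ S, x i) * (Real.exp (∑ i, ρ i * (x i - 1)) * (∑ i, ρ i * w i))
        + Real.exp (∑ i, ρ i * (x i - 1)) * (∑ i ∈ S, (∏ j ∈ S.erase i, x j) * w i)) := by
  simp [kinD, Lrho_apply, Pder_apply, smul_eq_mul]
  ring

private lemma kin_pd (c : ℝ) (S : Finset (Fin n)) (ρ : Fin n → ℝ) (x : Fin n → ℝ) (i₀ : Fin n) :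
    kinD c S ρ x (Pi.single i₀ 1) =
      c * ((∏ i ∈ S, x i) * (Real.exp (∑ i, ρ i * (x i - 1)) * ρ i₀)
        + Real.exp (∑ i, ρ i * (x i - 1)) *
          (if i₀ ∈ S then ∏ j ∈ S.erase i₀, x j else 0)) := by
  classical
  rw [kin_deriv_apply]
  congr 2
  · congr 1
    congr 1
    simp [Pi.single_apply, mul_ite, Finset.sum_ite_eq']
  · congr 1
    simp [Pi.single_apply, mul_ite, Finset.sum_ite_eq']

private lemma kin_contDiff (c : ℝ) (S : Finset (Fin n)) (ρ : Fin n → ℝ) :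
    ContDiff ℝ 1 (kin c S ρ) := by
  unfold kin
  refine contDiff_const.mul (ContDiff.mul ?_ ?_)
  · exact contDiff_prod fun i _ => (ContinuousLinearMap.proj i :
      (Fin n → ℝ) →L[ℝ] ℝ).contDiff
  · exact Real.contDiff_exp.comp (ContDiff.sum fun i _ => contDiff_const.mul
      (((ContinuousLinearMap.proj i : (Fin n → ℝ) →L[ℝ] ℝ).contDiff).sub contDiff_const))

private lemma gordan {n ν : ℕ} (Γ : Matrix (Fin n) (Fin ν) ℝ) (P : Finset (Fin n)) (hPne : P.Nonempty)
    (hcrit : ¬ ∃ lam : Fin n → ℝ, (∀ i, 0 ≤ lam i) ∧ lam ≠ 0 ∧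
        (∀ i, lam i ≠ 0 → i ∈ P) ∧ Matrix.vecMul lam Γ = 0) :
    ∃ v : Fin ν → ℝ, ∀ i ∈ P, 0 < Γ.mulVec v i := by
  classical
  set e : Fin n → (Fin ν → ℝ) := fun i => Γ i with he
  set s : Finset (Fin ν → ℝ) := P.image e with hs
  have hpick : ∀ y ∈ s, ∃ i, i ∈ P ∧ e i = y := by
    intro y hy
    simpa [hs, Finset.mem_image] using hy
  set pick : (Fin ν → ℝ) → Fin n :=
    fun y => if h : ∃ i, i ∈ P ∧ e i = y then h.choose else hPne.choose with hpickdef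
  have hpickP : ∀ y ∈ s, pick y ∈ P ∧ e (pick y) = y := by
    intro y hy
    have h := hpick y hy
    simp only [hpickdef, dif_pos h]
    exact h.choose_spec
  have h0 : (0 : Fin ν → ℝ) ∉ convexHull ℝ (↑s : Set (Fin ν → ℝ)) := by
    intro h0
    rw [Finset.convexHull_eq] at h0
    obtain ⟨w, hw0, hw1, hwc⟩ := h0
    set lam : Fin n → ℝ := fun i => ∑ y ∈ s.filter (fun y => pick y = i), w y with hlam
    have hlamsum : ∑ i, lam i = 1 := by
      rw [hlam]
      rw [Finset.sum_fiberwise_of_maps_to (fun y _ => Finset.mem_univ (pick y)) w]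
      exact hw1
    have hcm : ∑ y ∈ s, w y • y = 0 := by
      have h := Finset.centerMass_eq_of_sum_1 s id hw1
      rw [hwc] at h
      simpa using h.symm
    refine hcrit ⟨lam, ?_, ?_, ?_, ?_⟩
    · intro i
      exact Finset.sum_nonneg fun y hy => hw0 y (Finset.mem_filter.mp hy).1
    · intro hl
      rw [hl] at hlamsum
      simp at hlamsum
    · intro i hi
      rw [hlam] at hi
      have : (s.filter (fun y => pick y = i)).Nonempty := by
        by_contra hne
        rw [Finset.not_nonempty_iff_eq_empty] at hne
        simp [hne] at hi
      obtain ⟨y, hy⟩ := this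
      obtain ⟨hys, hpy⟩ := Finset.mem_filter.mp hy
      rw [← hpy]
      exact (hpickP y hys).1
    · funext k
      have hvm : Matrix.vecMul lam Γ k = ∑ i, lam i * Γ i k := by
        simp [Matrix.vecMul, dotProduct]
      rw [hvm]
      have : ∀ i : Fin n, lam i * Γ i k = ∑ y ∈ s.filter (fun y => pick y = i), w y * y k := by
        intro i
        rw [hlam, Finset.sum_mul]
        refine Finset.sum_congr rfl fun y hy => ?_
        obtain ⟨hys, hpy⟩ := Finset.mem_filter.mp hy
        have := (hpickP y hys).2
        rw [hpy] at this
        rw [← this]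
      rw [Finset.sum_congr rfl fun i _ => this i]
      rw [Finset.sum_fiberwise_of_maps_to (fun y _ => Finset.mem_univ (pick y))]
      have := congrFun hcm k
      simpa using this
  have hconv : Convex ℝ (convexHull ℝ (↑s : Set (Fin ν → ℝ))) := convex_convexHull ℝ _
  have hcl : IsClosed (convexHull ℝ (↑s : Set (Fin ν → ℝ))) :=
    (s.finite_toSet.isCompact_convexHull ℝ).isClosed
  obtain ⟨f, u, hfu, hb⟩ := geometric_hahn_banach_point_closed hconv hcl h0
  have hu : 0 < u := by simpa using hfu
  refine ⟨fun k => f (Pi.single k (1:ℝ)), fun i hi => ?_⟩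
  have hmem : Γ i ∈ convexHull ℝ (↑s : Set (Fin ν → ℝ)) := by
    apply subset_convexHull
    simp only [hs, Finset.coe_image, Set.mem_image, Finset.mem_coe]
    exact ⟨i, hi, rfl⟩
  have h2 := hb _ hmem
  have h3 : Γ.mulVec (fun k => f (Pi.single k (1:ℝ))) i = f (Γ i) := by
    have hdecomp : (Γ i : Fin ν → ℝ) = ∑ k, (Γ i k) • (Pi.single k (1:ℝ) : Fin ν → ℝ) := by
      rw [← Finset.univ_sum_single (Γ i)]
      refine Finset.sum_congr rfl fun k _ => ?_
      rw [← Pi.single_smul]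
      norm_num
    conv_rhs => rw [hdecomp]
    rw [map_sum]
    simp [Matrix.mulVec, dotProduct, map_smul, smul_eq_mul]
  rw [h3]
  linarith

end aux

/-- Theorem 5.5, part 1 (convex ℓ∞ form): a network with a critical deadlock admits no
convex piecewise-linear-in-rates robust Lyapunov function `‖C R(x)‖_∞`. -/
theorem stmt14 {n ν : ℕ} (A B : Matrix (Fin n) (Fin ν) ℕ)
    (Γ : Matrix (Fin n) (Fin ν) ℝ)
    (hΓ : ∀ i j, Γ i j = (B i j : ℝ) - (A i j : ℝ))
    (hAG : ∃ v : Fin ν → ℝ, (∀ j, 0 < v j) ∧ Γ.mulVec v = 0)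
    (P : Finset (Fin n)) (hPne : P.Nonempty)
    (hdeadlock : ∀ j : Fin ν, ∃ i ∈ P, 0 < A i j)
    (hcritical : ¬ ∃ lam : Fin n → ℝ, (∀ i, 0 ≤ lam i) ∧ lam ≠ 0 ∧
        (∀ i, lam i ≠ 0 → i ∈ P) ∧ Matrix.vecMul lam Γ = 0) :
    ¬ ∃ (q : ℕ) (C : Matrix (Fin q) (Fin ν) ℝ),
        (∀ r : Fin ν → ℝ, C.mulVec r = 0 ↔ Γ.mulVec r = 0) ∧
        ∀ R, IsAdmissible A R → ∀ x : Fin n → ℝ, (∀ i, 0 ≤ x i) →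
          dini (fun y => ‖C.mulVec (R y)‖) (fun y => Γ.mulVec (R y)) x ≤ 0 := by
  classical
  rintro ⟨q, C, hker, hlyap⟩
  obtain ⟨v, hv⟩ := gordan Γ P hPne hcritical
  obtain ⟨i₀, hi₀⟩ := hPne
  set g : Fin n → ℝ := Γ.mulVec v with hgdef
  have hgi₀ : 0 < g i₀ := hv i₀ hi₀
  have hν : ν ≠ 0 := by
    intro h
    subst h
    have h2 : g i₀ = 0 := by simp [hgdef, Matrix.mulVec, dotProduct]
    rw [h2] at hgi₀
    exact lt_irrefl 0 hgi₀
  haveI : NeZero ν := ⟨hν⟩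
  haveI : Nonempty (Fin ν) := ⟨⟨0, Nat.pos_of_ne_zero hν⟩⟩
  obtain ⟨v₀, hv₀pos, hv₀ker⟩ := hAG
  -- the scaling parameter t
  set t : ℝ := Finset.univ.inf' Finset.univ_nonempty (fun j => v₀ j / (|v j| + 1)) with htdef
  have ht : 0 < t := by
    rw [htdef, Finset.lt_inf'_iff]
    intro j _
    have h2 : (0:ℝ) < |v j| + 1 := by positivity
    exact div_pos (hv₀pos j) h2
  have htle : ∀ j, t * (|v j| + 1) ≤ v₀ j := by
    intro j
    have h1 : t ≤ v₀ j / (|v j| + 1) := Finset.inf'_le _ (Finset.mem_univ j)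
    have h2 : (0:ℝ) < |v j| + 1 := by positivity
    calc t * (|v j| + 1) ≤ (v₀ j / (|v j| + 1)) * (|v j| + 1) := by nlinarith
    _ = v₀ j := by field_simp
  set r : Fin ν → ℝ := fun j => v₀ j + t * v j with hrdef
  have hrpos : ∀ j, 0 < r j := by
    intro j
    have h1 := htle j
    have h2 : -(t * |v j|) ≤ t * v j := by nlinarith [neg_abs_le (v j)]
    have h3 : t * |v j| + t ≤ v₀ j := by nlinarith
    simp only [hrdef]
    nlinarith
  -- choice of reactant in P for each reaction
  have hσex : ∀ j, ∃ i, i ∈ P ∧ 0 < A i j := by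
    intro j
    obtain ⟨i, h1, h2⟩ := hdeadlock j
    exact ⟨i, h1, h2⟩
  set σ : Fin ν → Fin n := fun j => (hσex j).choose with hσdef
  have hσP : ∀ j, σ j ∈ P := fun j => (hσex j).choose_spec.1
  have hσA : ∀ j, 0 < A (σ j) j := fun j => (hσex j).choose_spec.2
  set S : Fin ν → Finset (Fin n) := fun j => Finset.univ.filter (fun i => 0 < A i j) with hSdef
  have hmemS : ∀ i j, i ∈ S j ↔ 0 < A i j := by
    intro i j
    simp [hSdef]
  have hσS : ∀ j, σ j ∈ S j := fun j => (hmemS _ _).2 (hσA j)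
  set sj : Fin ν → ℝ := fun j => ∑ i ∈ S j, g i with hsjdef
  set lam0 : ℝ := 1 + ∑ j, |sj j| with hlam0def
  have hlam0 : ∀ j, sj j + 1 ≤ lam0 := by
    intro j
    have h1 : |sj j| ≤ ∑ j', |sj j'| :=
      Finset.single_le_sum (f := fun j' => |sj j'|) (fun _ _ => abs_nonneg _) (Finset.mem_univ j)
    have h2 := le_abs_self (sj j)
    rw [hlam0def]
    linarith
  have hlam0pos : 0 < lam0 := by
    rw [hlam0def]
    have : 0 ≤ ∑ j, |sj j| := Finset.sum_nonneg fun _ _ => abs_nonneg _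
    linarith
  set ρ : Fin n → Fin ν → ℝ :=
    fun i j => if i = σ j then (lam0 - sj j) / g (σ j) else 0 with hρdef
  have hρnn : ∀ i j, 0 ≤ ρ i j := by
    intro i j
    show (0:ℝ) ≤ if i = σ j then (lam0 - sj j) / g (σ j) else 0
    by_cases h : i = σ j
    · rw [if_pos h]
      have h1 := hlam0 j
      exact div_nonneg (by linarith) (hv _ (hσP j)).le
    · rw [if_neg h]
  -- the kinetics
  set R : (Fin n → ℝ) → Fin ν → ℝ := fun y j => kin (r j) (S j) (fun i => ρ i j) y with hRdef
  have hpdR : ∀ x j i, pd R x j i = kinD (r j) (S j) (fun i' => ρ i' j) x (Pi.single i 1) := by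
    intro x j i
    unfold pd
    rw [(kin_hasFDerivAt (r j) (S j) (fun i' => ρ i' j) x).fderiv]
  have hadm : IsAdmissible A R := by
    constructor
    · rw [contDiff_pi]
      intro j
      exact kin_contDiff _ _ _
    · intro x hx j
      show 0 ≤ kin (r j) (S j) (fun i => ρ i j) x
      unfold kin
      have h1 : 0 ≤ ∏ i ∈ S j, x i := Finset.prod_nonneg fun i _ => hx i
      exact mul_nonneg (hrpos j).le (mul_nonneg h1 (Real.exp_pos _).le)
    · intro x hx i j hA hxi
      show kin (r j) (S j) (fun i => ρ i j) x = 0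
      unfold kin
      have h1 : ∏ i' ∈ S j, x i' = 0 := Finset.prod_eq_zero ((hmemS i j).2 hA) hxi
      rw [h1]
      ring
    · intro x hx i j hA
      rw [hpdR, kin_pd]
      have hx0 : 0 ≤ ∏ i' ∈ S j, x i' := Finset.prod_nonneg fun i' _ => hx i'
      have hxe : 0 ≤ ∏ i' ∈ (S j).erase i, x i' :=
        Finset.prod_nonneg fun i' _ => hx i'
      have h2 : 0 ≤ (if i ∈ S j then ∏ i' ∈ (S j).erase i, x i' else 0) := by
        split_ifs
        exacts [hxe, le_refl 0]
      apply mul_nonneg (hrpos j).le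
      apply add_nonneg
      · exact mul_nonneg hx0 (mul_nonneg (Real.exp_pos _).le (hρnn i j))
      · exact mul_nonneg (Real.exp_pos _).le h2
    · intro x hx i j hA
      rw [hpdR, kin_pd]
      have hiS : i ∉ S j := by
        rw [hmemS]
        omega
      have hiσ : i ≠ σ j := by
        intro h
        rw [h] at hA
        have := hσA j
        omega
      have hρ0 : ρ i j = 0 := by
        show (if i = σ j then (lam0 - sj j) / g (σ j) else 0) = 0
        rw [if_neg hiσ]
      rw [if_neg hiS, hρ0]
      ring
    · intro x hx i j hA
      rw [hpdR, kin_pd]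
      have hiS : i ∈ S j := (hmemS i j).2 hA
      rw [if_pos hiS]
      have h1 : 0 < ∏ i' ∈ (S j).erase i, x i' := Finset.prod_pos fun i' _ => hx i'
      have hx0 : 0 ≤ ∏ i' ∈ S j, x i' := Finset.prod_nonneg fun i' _ => (hx i').le
      have h2 : 0 ≤ (∏ i' ∈ S j, x i') * (Real.exp (∑ i'', ρ i'' j * (x i'' - 1)) * ρ i j) :=
        mul_nonneg hx0 (mul_nonneg (Real.exp_pos _).le (hρnn i j))
      have h3 : 0 < Real.exp (∑ i'', ρ i'' j * (x i'' - 1)) * ∏ i' ∈ (S j).erase i, x i' :=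
        mul_pos (Real.exp_pos _) h1
      have := hrpos j
      nlinarith
  -- the evaluation point: all ones
  set x₀ : Fin n → ℝ := fun _ => 1 with hx₀def
  have hx₀ : ∀ i, (0:ℝ) ≤ x₀ i := fun i => by norm_num [hx₀def]
  have hR1 : R x₀ = r := by
    funext j
    show kin (r j) (S j) (fun i => ρ i j) x₀ = r j
    unfold kin
    simp [hx₀def]
  set d : Fin n → ℝ := fun i => t * g i with hddef
  have hΓr : Γ.mulVec r = d := by
    funext i
    have h1 : Γ.mulVec r i = ∑ j, Γ i j * (v₀ j + t * v j) := by
      simp [Matrix.mulVec, dotProduct, hrdef]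
    have h2 : ∑ j, Γ i j * (v₀ j + t * v j)
        = (∑ j, Γ i j * v₀ j) + t * ∑ j, Γ i j * v j := by
      rw [Finset.mul_sum, ← Finset.sum_add_distrib]
      exact Finset.sum_congr rfl fun j _ => by ring
    have h3 : ∑ j, Γ i j * v₀ j = 0 := by
      have := congrFun hv₀ker i
      simpa [Matrix.mulVec, dotProduct] using this
    have h4 : ∑ j, Γ i j * v j = g i := by
      simp [hgdef, Matrix.mulVec, dotProduct]
    rw [h1, h2, h3, h4, hddef]
    ring
  have hγ : HasDerivAt (fun h : ℝ => x₀ + h • d) d 0 := by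
    have h1 : HasDerivAt (fun h : ℝ => h) 1 0 := hasDerivAt_id 0
    have h2 := (h1.smul_const d).const_add x₀
    simpa using h2
  have hgσne : ∀ j, g (σ j) ≠ 0 := fun j => (hv _ (hσP j)).ne'
  have hkey : ∀ j, kinD (r j) (S j) (fun i' => ρ i' j) x₀ d = r j * (t * lam0) := by
    intro j
    rw [kin_deriv_apply]
    have hsum0 : (∑ i, ρ i j * (x₀ i - 1)) = 0 := by simp [hx₀def]
    have hsum1 : (∑ i, ρ i j * d i) = t * (lam0 - sj j) := by
      rw [Finset.sum_eq_single (σ j)]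
      · have hρσ : ρ (σ j) j = (lam0 - sj j) / g (σ j) := by
          simp [hρdef]
        have hdσ : d (σ j) = t * g (σ j) := rfl
        rw [hρσ, hdσ]
        calc (lam0 - sj j) / g (σ j) * (t * g (σ j))
            = t * (lam0 - sj j) * (g (σ j) / g (σ j)) := by ring
        _ = t * (lam0 - sj j) := by rw [div_self (hgσne j), mul_one]
      · intro i _ hne
        have hρ0 : ρ i j = 0 := by
          simp [hρdef, hne]
        rw [hρ0]
        ring
      · intro h
        exact absurd (Finset.mem_univ _) h
    have hsum2 : (∑ i ∈ S j, (∏ i' ∈ (S j).erase i, x₀ i') * d i) = t * sj j := by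
      have heach : ∀ i ∈ S j, (∏ i' ∈ (S j).erase i, x₀ i') * d i = t * g i := by
        intro i _
        simp [hx₀def, hddef]
      rw [Finset.sum_congr rfl heach, ← Finset.mul_sum]
    rw [hsum0, hsum1, hsum2]
    have hprod : (∏ i ∈ S j, x₀ i) = 1 := by simp [hx₀def]
    rw [hprod, Real.exp_zero]
    ring
  set w : Fin q → ℝ := C.mulVec r with hwdef
  have hw : w ≠ 0 := by
    intro h
    have h2 : Γ.mulVec r = 0 := (hker r).1 h
    rw [hΓr] at h2
    have h3 : d i₀ = 0 := congrFun h2 i₀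
    have h4 : d i₀ = t * g i₀ := rfl
    rw [h4] at h3
    nlinarith
  haveI : Nonempty (Fin q) := by
    rcases Nat.eq_zero_or_pos q with hq | hq
    · exfalso
      subst hq
      exact hw (funext fun k => k.elim0)
    · exact ⟨⟨0, hq⟩⟩
  obtain ⟨k, -, hk⟩ := Finset.exists_max_image Finset.univ (fun k => |w k|) Finset.univ_nonempty
  have hk' : ∀ k', |w k'| ≤ |w k| := fun k' => hk k' (Finset.mem_univ k')
  have hnorm : ‖w‖ = |w k| := by
    apply le_antisymm
    · refine (pi_norm_le_iff_of_nonneg (abs_nonneg _)).2 fun k' => ?_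
      rw [Real.norm_eq_abs]
      exact hk' k'
    · rw [← Real.norm_eq_abs]
      exact norm_le_pi_norm w k
  have hwk : w k ≠ 0 := by
    intro h
    apply hw
    funext k'
    have h2 := hk' k'
    rw [h] at h2
    simp only [abs_zero] at h2
    have := abs_nonneg (w k')
    have : |w k'| = 0 := le_antisymm h2 this
    exact abs_eq_zero.1 this
  -- componentwise derivative along the ray
  have hcomp : ∀ k' : Fin q, HasDerivAt (fun h : ℝ => C.mulVec (R (x₀ + h • d)) k')
      (t * lam0 * w k') 0 := by
    intro k'
    have hFj : ∀ j, HasDerivAt (fun h : ℝ => R (x₀ + h • d) j) (r j * (t * lam0)) 0 := by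
      intro j
      have h0 : x₀ + (0:ℝ) • d = x₀ := by simp
      have h1 := (kin_hasFDerivAt (r j) (S j) (fun i' => ρ i' j)
        (x₀ + (0:ℝ) • d)).comp_hasDerivAt 0 hγ
      rw [h0, hkey j] at h1
      exact h1
    have h2 : HasDerivAt (fun h : ℝ => ∑ j, C k' j * R (x₀ + h • d) j)
        (∑ j, C k' j * (r j * (t * lam0))) 0 :=
      HasDerivAt.fun_sum fun j _ => (hFj j).const_mul _
    have h3 : (∑ j, C k' j * (r j * (t * lam0))) = t * lam0 * w k' := by
      have hwk' : w k' = ∑ j, C k' j * r j := by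
        simp [hwdef, Matrix.mulVec, dotProduct]
      rw [hwk', Finset.mul_sum]
      exact Finset.sum_congr rfl fun j _ => by ring
    have h4 : (fun h : ℝ => C.mulVec (R (x₀ + h • d)) k')
        = fun h : ℝ => ∑ j, C k' j * R (x₀ + h • d) j := by
      funext h
      simp [Matrix.mulVec, dotProduct]
    rw [h4, ← h3]
    exact h2
  set G : ℝ → Fin q → ℝ := fun h => C.mulVec (R (x₀ + h • d)) with hGdef
  have hG : HasDerivAt G ((t * lam0) • w) 0 := by
    refine hasDerivAt_pi.2 fun k' => ?_
    have := hcomp k'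
    simpa using this
  have hG0 : G 0 = w := by
    simp only [hGdef]
    rw [zero_smul, add_zero, hR1]
  set ψ : ℝ → ℝ := fun h => G h k with hψdef
  have hψ : HasDerivAt ψ (t * lam0 * w k) 0 := hcomp k
  have hψ0 : ψ 0 = w k := by
    show G 0 k = w k
    rw [hG0]
  set ς : ℝ := if 0 < w k then (1:ℝ) else -1 with hςdef
  have hςabs : ς * w k = |w k| := by
    by_cases h : 0 < w k
    · rw [hςdef, if_pos h, abs_of_pos h]
      ring
    · have hlt : w k < 0 := lt_of_le_of_ne (not_lt.1 h) hwk
      rw [hςdef, if_neg h, abs_of_neg hlt]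
      ring
  set L : ℝ := t * lam0 * |w k| with hLdef
  have hLpos : 0 < L := by
    have h1 : 0 < |w k| := abs_pos.2 hwk
    rw [hLdef]
    positivity
  set m : ℝ → ℝ := fun h => ς * ψ h with hmdef
  have hm : HasDerivAt m L 0 := by
    have h1 := hψ.const_mul ς
    have heq : ς * (t * lam0 * w k) = L := by
      rw [hLdef, ← hςabs]
      ring
    rw [heq] at h1
    exact h1
  have hm0 : m 0 = |w k| := by
    rw [hmdef]
    show ς * ψ 0 = |w k|
    rw [hψ0, hςabs]
  have hmpos : ∀ᶠ h in 𝓝[>] (0:ℝ), 0 < m h := by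
    have h1 : Tendsto m (𝓝 0) (𝓝 (m 0)) := hm.continuousAt
    have h2 : ∀ᶠ z in 𝓝 (m 0), 0 < z := eventually_gt_nhds (by rw [hm0]; exact abs_pos.2 hwk)
    exact (h1.eventually h2).filter_mono nhdsWithin_le_nhds
  have habs : ∀ᶠ h in 𝓝[>] (0:ℝ), |ψ h| = m h := by
    filter_upwards [hmpos] with h hh
    have hς1 : |ς| = 1 := by
      rw [hςdef]
      split_ifs <;> simp
    have : |ψ h| = |m h| := by
      rw [hmdef]
      show |ψ h| = |ς * ψ h|
      rw [abs_mul, hς1, one_mul]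
    rw [this, abs_of_pos hh]
  have hio : 𝓝[>] (0:ℝ) ≤ 𝓝[≠] (0:ℝ) :=
    nhdsWithin_mono 0 (fun h hh => ne_of_gt hh)
  set p : ℝ → ℝ := fun h => (|ψ h| - |ψ 0|) / h with hpdef
  have hp : Tendsto p (𝓝[>] (0:ℝ)) (𝓝 L) := by
    have h1 := (hasDerivAt_iff_tendsto_slope.1 hm).mono_left hio
    refine h1.congr' ?_
    filter_upwards [habs] with h hh
    rw [slope_def_field, hpdef]
    show (m h - m 0) / (h - 0) = (|ψ h| - |ψ 0|) / h
    rw [hh, hm0, hψ0, sub_zero]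
  set qf : ℝ → ℝ :=
    fun h => (‖C.mulVec (R (x₀ + h • Γ.mulVec (R x₀)))‖ - ‖C.mulVec (R x₀)‖) / h with hqfdef
  have hqf1 : ∀ h : ℝ, qf h = (‖G h‖ - ‖w‖) / h := by
    intro h
    rw [hqfdef]
    show (‖C.mulVec (R (x₀ + h • Γ.mulVec (R x₀)))‖ - ‖C.mulVec (R x₀)‖) / h = _
    rw [hR1, hΓr, hGdef, hwdef]
  have hpq : p ≤ᶠ[𝓝[>] (0:ℝ)] qf := by
    filter_upwards [self_mem_nhdsWithin] with h hh
    have hh0 : (0:ℝ) < h := hh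
    rw [hqf1, hpdef]
    show (|ψ h| - |ψ 0|) / h ≤ _
    have h1 : |ψ h| ≤ ‖G h‖ := by
      rw [← Real.norm_eq_abs]
      exact norm_le_pi_norm (G h) k
    have h2 : |ψ 0| = ‖w‖ := by rw [hψ0, hnorm]
    rw [h2]
    gcongr
  set Qf : ℝ → ℝ := fun h => ‖slope G 0 h‖ with hQfdef
  have hQ : Tendsto Qf (𝓝[>] (0:ℝ)) (𝓝 ‖(t * lam0) • w‖) := by
    have h1 := (hasDerivAt_iff_tendsto_slope.1 hG).mono_left hio
    exact (continuous_norm.tendsto _).comp h1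
  have hqQ : qf ≤ᶠ[𝓝[>] (0:ℝ)] Qf := by
    filter_upwards [self_mem_nhdsWithin] with h hh
    have hh0 : (0:ℝ) < h := hh
    rw [hqf1, hQfdef]
    show _ ≤ ‖slope G 0 h‖
    rw [slope_def_module]
    have h2 : ‖(h - 0)⁻¹ • (G h - G 0)‖ = ‖G h - G 0‖ / h := by
      rw [norm_smul, sub_zero, norm_inv, Real.norm_eq_abs, abs_of_pos hh0]
      rw [inv_mul_eq_div]
    rw [sub_zero] at h2 ⊢
    rw [h2, hG0]
    have h1 : ‖G h‖ - ‖w‖ ≤ ‖G h - w‖ := norm_sub_norm_le _ _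
    gcongr
  have hbq : IsBoundedUnder (· ≤ ·) (𝓝[>] (0:ℝ)) qf := (hQ.isBoundedUnder_le).mono_le hqQ
  have hcp : IsCoboundedUnder (· ≤ ·) (𝓝[>] (0:ℝ)) p := hp.isCoboundedUnder_le
  have h1 : limsup p (𝓝[>] (0:ℝ)) ≤ limsup qf (𝓝[>] (0:ℝ)) := limsup_le_limsup hpq hcp hbq
  have h2 : limsup p (𝓝[>] (0:ℝ)) = L := hp.limsup_eq
  have h3 := hlyap R hadm x₀ hx₀
  have h4 : dini (fun y => ‖C.mulVec (R y)‖) (fun y => Γ.mulVec (R y)) x₀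
      = limsup qf (𝓝[>] (0:ℝ)) := rfl
  rw [h4] at h3
  linarith
end

section
/- Consider a chemical reaction network with matrices A, B ∈ ℤ≥0^{n×ν}, Γ = B − A, which is conservative (there exists w ≫ 0 with wᵀΓ = 0), satisfies assumption AG (ker Γ contains a strictly positive vector), and has dim ker Γ = 1. Suppose the network has a critical siphon: a nonempty set P of species such that every input reaction of a species in P is an output reaction of some species in P, and P does not contain the support of any nonzero nonnegative λ ∈ ℝⁿ with λᵀΓ = 0. Then there exists no matrix C ∈ ℝ^{q×ν} with ker C = ker Γ such that for every admissible kinetics R ∈ K_A and every x ∈ ℝ≥0ⁿ, the upper Dini derivative of x ↦ ‖C R(x)‖_∞ along the vector field x ↦ ΓR(x) is nonpositive. -/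
open Filter Set Topology

lemma hasFDerivAt_mono {n : ℕ} (c : ℝ) (E : Fin n → ℕ) (x : Fin n → ℝ) :
    HasFDerivAt (fun y : Fin n → ℝ => c * ∏ i, y i ^ E i)
      (c • ∑ i, (∏ i' ∈ Finset.univ.erase i, x i' ^ E i') •
        (((E i : ℝ) * x i ^ (E i - 1)) • (ContinuousLinearMap.proj i : (Fin n → ℝ) →L[ℝ] ℝ))) x := by
  have h : ∀ i ∈ Finset.univ, HasFDerivAt (fun y : Fin n → ℝ => (y i) ^ E i)
      (((E i : ℝ) * x i ^ (E i - 1)) • (ContinuousLinearMap.proj i : (Fin n → ℝ) →L[ℝ] ℝ)) x :=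
    fun i _ => (hasDerivAt_pow (E i) (x i)).comp_hasFDerivAt x
      ((ContinuousLinearMap.proj i : (Fin n → ℝ) →L[ℝ] ℝ).hasFDerivAt (x := x))
  have h2 := HasFDerivAt.finset_prod h
  exact (h2.const_mul c).congr_fderiv rfl

lemma pd_mono {n ν : ℕ} (r : Fin ν → ℝ) (e : Fin ν → Fin n → ℕ) (x : Fin n → ℝ)
    (j : Fin ν) (i : Fin n) :
    pd (fun y k => r k * ∏ i', y i' ^ e k i') x j i
      = r j * ((∏ i' ∈ Finset.univ.erase i, x i' ^ e j i') *
          ((e j i : ℝ) * x i ^ (e j i - 1))) := by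
  have h := hasFDerivAt_mono (r j) (e j) x
  have hfd : fderiv ℝ (fun y : Fin n → ℝ => r j * ∏ i', y i' ^ e j i') x
      = r j • ∑ i', (∏ i'' ∈ Finset.univ.erase i', x i'' ^ e j i'') •
        (((e j i' : ℝ) * x i' ^ (e j i' - 1)) •
          (ContinuousLinearMap.proj i' : (Fin n → ℝ) →L[ℝ] ℝ)) := h.fderiv
  unfold pd
  rw [hfd]
  simp only [ContinuousLinearMap.smul_apply, ContinuousLinearMap.sum_apply,
    ContinuousLinearMap.proj_apply, smul_eq_mul]
  rw [Finset.sum_eq_single i]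
  · simp [Pi.single_apply]
  · intro b _ hbi
    simp [Pi.single_apply, hbi]
  · intro hmem; exact absurd (Finset.mem_univ i) hmem

lemma isAdmissible_mono {n ν : ℕ} (A : Matrix (Fin n) (Fin ν) ℕ) (r : Fin ν → ℝ)
    (e : Fin ν → Fin n → ℕ) (hr : ∀ j, 0 < r j) (he : ∀ j i, 0 < A i j ↔ 0 < e j i) :
    IsAdmissible A (fun y j => r j * ∏ i', y i' ^ e j i') where
  smooth := by
    apply contDiff_pi.2
    intro j
    exact contDiff_const.mul (contDiff_prod fun i _ =>
      ((ContinuousLinearMap.proj i : (Fin n → ℝ) →L[ℝ] ℝ).contDiff).pow (e j i))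
  nonneg x hx j := mul_nonneg (hr j).le (Finset.prod_nonneg fun i _ => pow_nonneg (hx i) _)
  vanish x _ i j hA hxi := by
    have h1 : 0 < e j i := (he j i).1 hA
    have : x i ^ e j i = 0 := by rw [hxi]; exact zero_pow (by omega)
    rw [Finset.prod_eq_zero (Finset.mem_univ i) this, mul_zero]
  deriv_nonneg x hx i j _ := by
    rw [pd_mono]
    have h1 : (0:ℝ) ≤ ∏ i' ∈ Finset.univ.erase i, x i' ^ e j i' :=
      Finset.prod_nonneg fun i' _ => pow_nonneg (hx i') _
    have h2 : (0:ℝ) ≤ (e j i : ℝ) * x i ^ (e j i - 1) :=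
      mul_nonneg (Nat.cast_nonneg _) (pow_nonneg (hx i) _)
    exact mul_nonneg (hr j).le (mul_nonneg h1 h2)
  deriv_zero x _ i j hA := by
    rw [pd_mono]
    have h1 : e j i = 0 := by
      by_contra h
      exact absurd ((he j i).2 (Nat.pos_of_ne_zero h)) (by omega)
    simp [h1]
  deriv_pos x hx i j hA := by
    rw [pd_mono]
    have h1 : 0 < e j i := (he j i).1 hA
    have h2 : (0:ℝ) < ∏ i' ∈ Finset.univ.erase i, x i' ^ e j i' :=
      Finset.prod_pos fun i' _ => pow_pos (hx i') _
    have h3 : (0:ℝ) < (e j i : ℝ) * x i ^ (e j i - 1) :=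
      mul_pos (by exact_mod_cast h1) (pow_pos (hx i) _)
    exact mul_pos (hr j) (mul_pos h2 h3)

lemma dini_constraint {q n ν : ℕ} (C : Matrix (Fin q) (Fin ν) ℝ) (Γ : Matrix (Fin n) (Fin ν) ℝ)
    (R : (Fin n → ℝ) → Fin ν → ℝ) (x : Fin n → ℝ)
    (L : Fin ν → ((Fin n → ℝ) →L[ℝ] ℝ))
    (hL : ∀ j, HasFDerivAt (fun y => R y j) (L j) x)
    (k : Fin q) (s : ℝ) (hs : s = 1 ∨ s = -1)
    (hk : s * (C.mulVec (R x)) k = ‖C.mulVec (R x)‖)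
    (hdini : dini (fun y => ‖C.mulVec (R y)‖) (fun y => Γ.mulVec (R y)) x ≤ 0) :
    s * (C.mulVec (fun j => L j (Γ.mulVec (R x)))) k ≤ 0 := by
  have hCcont : Continuous fun z : Fin ν → ℝ => C.mulVec z := by
    have h1 := LinearMap.continuous_of_finiteDimensional (Matrix.mulVecLin C)
    have h2 : (fun z : Fin ν → ℝ => C.mulVec z) = fun z => Matrix.mulVecLin C z := by
      funext z; rw [Matrix.mulVecLin_apply]
    rw [h2]; exact h1
  set c : Fin n → ℝ := Γ.mulVec (R x) with hc
  set Dc : Fin ν → ℝ := fun j => L j c with hDc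
  set ρ : ℝ → Fin ν → ℝ := fun h j => (R (x + h • c) j - R x j) / h with hρ
  have htend : ∀ j, Tendsto (fun h => ρ h j) (𝓝[>] (0:ℝ)) (𝓝 (Dc j)) := by
    intro j
    have hline : HasDerivAt (fun h : ℝ => x + h • c) c 0 := by
      have h1 := ((hasDerivAt_id (0:ℝ)).smul_const c).const_add x
      simpa using h1
    have hcomp : HasDerivAt (fun h : ℝ => R (x + h • c) j) (L j c) 0 := by
      have h1 := (hL j).comp_hasDerivAt_of_eq (0:ℝ) hline (by simp)
      exact h1
    have hslope := hasDerivAt_iff_tendsto_slope.1 hcomp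
    have heq : ∀ h : ℝ, slope (fun h : ℝ => R (x + h • c) j) 0 h = ρ h j := by
      intro h
      rw [slope_def_field]
      simp [hρ]
    have h2 : Tendsto (fun h => ρ h j) (𝓝[≠] (0:ℝ)) (𝓝 (L j c)) := by
      refine Tendsto.congr heq hslope
    exact h2.mono_left (nhdsWithin_mono 0 (fun h hh => ne_of_gt hh))
  have hρt : Tendsto ρ (𝓝[>] (0:ℝ)) (𝓝 Dc) := tendsto_pi_nhds.2 htend
  have hcont1 : Continuous fun z : Fin ν → ℝ => s * (C.mulVec z) k :=
    continuous_const.mul ((continuous_apply k).comp hCcont)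
  have hlow : Tendsto (fun h => s * (C.mulVec (ρ h)) k) (𝓝[>] (0:ℝ))
      (𝓝 (s * (C.mulVec Dc) k)) := (hcont1.tendsto Dc).comp hρt
  have hup : Tendsto (fun h => ‖C.mulVec (ρ h)‖) (𝓝[>] (0:ℝ))
      (𝓝 ‖C.mulVec Dc‖) := ((continuous_norm.comp hCcont).tendsto Dc).comp hρt
  set Q : ℝ → ℝ := fun h => (‖C.mulVec (R (x + h • c))‖ - ‖C.mulVec (R x)‖) / h with hQ
  have hev : ∀ᶠ h in 𝓝[>] (0:ℝ),
      s * (C.mulVec (ρ h)) k ≤ Q h ∧ Q h ≤ ‖C.mulVec (ρ h)‖ := by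
    filter_upwards [self_mem_nhdsWithin] with h hh
    have hpos : (0:ℝ) < h := hh
    have hne : h ≠ 0 := ne_of_gt hpos
    have hsplit : C.mulVec (R (x + h • c)) = C.mulVec (R x) + h • C.mulVec (ρ h) := by
      have h1 : R (x + h • c) = R x + h • ρ h := by
        funext j
        simp only [hρ, Pi.add_apply, Pi.smul_apply, smul_eq_mul]
        field_simp
        ring
      rw [h1, Matrix.mulVec_add, Matrix.mulVec_smul]
    constructor
    · have h1 : s * (C.mulVec (R (x + h • c))) k ≤ ‖C.mulVec (R (x + h • c))‖ := by
        have h2 := norm_le_pi_norm (C.mulVec (R (x + h • c))) k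
        rw [Real.norm_eq_abs] at h2
        rcases hs with rfl | rfl
        · calc 1 * (C.mulVec (R (x + h • c))) k ≤ |(C.mulVec (R (x + h • c))) k| := by
                rw [one_mul]; exact le_abs_self _
            _ ≤ _ := h2
        · calc (-1) * (C.mulVec (R (x + h • c))) k ≤ |(C.mulVec (R (x + h • c))) k| := by
                rw [neg_one_mul]; exact neg_le_abs _
            _ ≤ _ := h2
      have h3 : s * (C.mulVec (R (x + h • c))) k
          = s * (C.mulVec (R x)) k + h * (s * (C.mulVec (ρ h)) k) := by
        rw [hsplit]; simp only [Pi.add_apply, Pi.smul_apply, smul_eq_mul]; ring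
      have h4 : h * (s * (C.mulVec (ρ h)) k) ≤ ‖C.mulVec (R (x + h • c))‖ - ‖C.mulVec (R x)‖ := by
        rw [← hk]; linarith
      calc s * (C.mulVec (ρ h)) k = h * (s * (C.mulVec (ρ h)) k) / h := by
            field_simp
        _ ≤ Q h := by
            exact div_le_div_of_nonneg_right h4 hpos.le |>.trans_eq rfl
    · have h5 : ‖C.mulVec (R (x + h • c))‖ ≤ ‖C.mulVec (R x)‖ + h * ‖C.mulVec (ρ h)‖ := by
        rw [hsplit]
        refine (norm_add_le _ _).trans ?_
        rw [norm_smul, Real.norm_eq_abs, abs_of_pos hpos]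
      have h6 : ‖C.mulVec (R (x + h • c))‖ - ‖C.mulVec (R x)‖ ≤ h * ‖C.mulVec (ρ h)‖ := by
        linarith
      calc Q h ≤ h * ‖C.mulVec (ρ h)‖ / h := div_le_div_of_nonneg_right h6 hpos.le |>.trans_eq rfl
        _ = ‖C.mulVec (ρ h)‖ := by field_simp
  have hdini' : sInf {a : ℝ | ∀ᶠ h in 𝓝[>] (0:ℝ), Q h ≤ a} ≤ 0 := by
    rw [dini, limsup_eq] at hdini
    exact hdini
  have hSne : ({a : ℝ | ∀ᶠ h in 𝓝[>] (0:ℝ), Q h ≤ a}).Nonempty := by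
    refine ⟨‖C.mulVec Dc‖ + 1, ?_⟩
    have h1 : ∀ᶠ h in 𝓝[>] (0:ℝ), ‖C.mulVec (ρ h)‖ ≤ ‖C.mulVec Dc‖ + 1 :=
      hup.eventually_le_const (by linarith)
    filter_upwards [h1, hev] with h h1 h2
    exact h2.2.trans h1
  have hlb : ∀ a ∈ {a : ℝ | ∀ᶠ h in 𝓝[>] (0:ℝ), Q h ≤ a}, s * (C.mulVec Dc) k ≤ a := by
    intro a ha
    by_contra hlt
    push_neg at hlt
    have h3 : ∀ᶠ h in 𝓝[>] (0:ℝ), a < s * (C.mulVec (ρ h)) k :=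
      hlow.eventually_const_lt hlt
    obtain ⟨h0, hh1, hh2, hh3⟩ := (h3.and (hev.and ha)).exists
    have := hh2.1
    linarith
  exact le_trans (le_csInf hSne hlb) hdini'

lemma key_constraint {q n ν : ℕ} (A : Matrix (Fin n) (Fin ν) ℕ) (C : Matrix (Fin q) (Fin ν) ℝ)
    (Γ : Matrix (Fin n) (Fin ν) ℝ)
    (hLyap : ∀ R, IsAdmissible A R → ∀ x : Fin n → ℝ, (∀ i, 0 ≤ x i) →
          dini (fun y => ‖C.mulVec (R y)‖) (fun y => Γ.mulVec (R y)) x ≤ 0)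
    (rb : Fin ν → ℝ) (hrb : ∀ j, 0 < rb j)
    (k : Fin q) (s : ℝ) (hs : s = 1 ∨ s = -1)
    (hk : s * (C.mulVec rb) k = ‖C.mulVec rb‖)
    (j0 : Fin ν) (i0 : Fin n) (hA0 : 0 < A i0 j0) (hd0 : 0 < (Γ.mulVec rb) i0) :
    s * C k j0 ≤ 0 := by
  classical
  set d : Fin n → ℝ := Γ.mulVec rb with hd
  set e : ℕ → Fin ν → Fin n → ℕ :=
    fun M j i => if 0 < A i j then (if j = j0 ∧ i = i0 then 1 + M else 1) else 0 with he
  set xb : Fin n → ℝ := fun _ => 1 with hxb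
  have hxbnn : ∀ i, (0:ℝ) ≤ xb i := fun _ => zero_le_one
  have hiff : ∀ M j i, 0 < A i j ↔ 0 < e M j i := by
    intro M j i
    constructor
    · intro h
      simp only [he]
      rw [if_pos h]
      split <;> omega
    · intro h
      by_contra hA
      simp only [he] at h
      rw [if_neg hA] at h
      omega
  have hRx : ∀ M : ℕ, (fun j => rb j * ∏ i', xb i' ^ e M j i') = rb := by
    intro M; funext j; simp [hxb]
  have hmain : ∀ M : ℕ,
      s * (∑ j, C k j * (rb j * ∑ i, (e M j i : ℝ) * d i)) ≤ 0 := by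
    intro M
    have hAdm := isAdmissible_mono A rb (e M) hrb (hiff M)
    have hdini := hLyap _ hAdm xb hxbnn
    have hL : ∀ j, HasFDerivAt (fun y => (fun y (j : Fin ν) => rb j * ∏ i', y i' ^ e M j i') y j)
        ((rb j) • ∑ i, (∏ i' ∈ Finset.univ.erase i, xb i' ^ e M j i') •
          (((e M j i : ℝ) * xb i ^ (e M j i - 1)) •
            (ContinuousLinearMap.proj i : (Fin n → ℝ) →L[ℝ] ℝ))) xb :=
      fun j => hasFDerivAt_mono (rb j) (e M j) xb
    have hcon := dini_constraint C Γ _ xb _ hL k s hs (by rw [hRx]; exact hk) hdini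
    rw [hRx] at hcon
    have hLd : (fun j => ((rb j) • ∑ i, (∏ i' ∈ Finset.univ.erase i, xb i' ^ e M j i') •
          (((e M j i : ℝ) * xb i ^ (e M j i - 1)) •
            (ContinuousLinearMap.proj i : (Fin n → ℝ) →L[ℝ] ℝ))) d)
        = fun j => rb j * ∑ i, (e M j i : ℝ) * d i := by
      funext j
      simp [hxb, Finset.prod_const_one]
    rw [hLd] at hcon
    have hmv : (C.mulVec fun j => rb j * ∑ i, (e M j i : ℝ) * d i) k
        = ∑ j, C k j * (rb j * ∑ i, (e M j i : ℝ) * d i) := by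
      simp [Matrix.mulVec, dotProduct]
    rw [hmv] at hcon
    exact hcon
  set K0 : ℝ := s * (∑ j, C k j * (rb j * ∑ i, (e 0 j i : ℝ) * d i)) with hK0
  set t0 : ℝ := s * (C k j0 * (rb j0 * d i0)) with ht0
  have hsum : ∀ (M : ℕ) (j : Fin ν), (∑ i, (e M j i : ℝ) * d i)
      = (∑ i, (e 0 j i : ℝ) * d i) + (if j = j0 then (M : ℝ) * d i0 else 0) := by
    intro M j
    by_cases hj : j = j0
    · have hterm : ∀ i, (e M j i : ℝ) * d i
          = (e 0 j i : ℝ) * d i + (if i = i0 then (M:ℝ) * d i0 else 0) := by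
        intro i
        by_cases hi : i = i0
        · rw [hi]
          simp only [he, hj, hA0, if_true, and_self, if_pos rfl]
          push_cast; ring
        · have h1 : e M j i = e 0 j i := by simp [he, hi]
          simp [h1, hi]
      rw [Finset.sum_congr rfl (fun i _ => hterm i), Finset.sum_add_distrib,
        Finset.sum_ite_eq' Finset.univ i0]
      simp [hj]
    · have hsame : ∀ i, e M j i = e 0 j i := by
        intro i; simp [he, hj]
      simp [hsame, hj]
  have haffine : ∀ M : ℕ,
      s * (∑ j, C k j * (rb j * ∑ i, (e M j i : ℝ) * d i)) = K0 + (M : ℝ) * t0 := by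
    intro M
    rw [hK0, ht0]
    have hterm : ∀ j, C k j * (rb j * ∑ i, (e M j i : ℝ) * d i)
        = C k j * (rb j * ∑ i, (e 0 j i : ℝ) * d i)
          + (if j = j0 then C k j0 * (rb j0 * ((M:ℝ) * d i0)) else 0) := by
      intro j
      rw [hsum M j]
      by_cases hj : j = j0
      · rw [if_pos hj, if_pos hj, hj]; ring
      · rw [if_neg hj, if_neg hj]; ring
    rw [Finset.sum_congr rfl (fun j _ => hterm j), Finset.sum_add_distrib,
      Finset.sum_ite_eq' Finset.univ j0]
    simp only [Finset.mem_univ, if_true]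
    ring
  have ht0le : t0 ≤ 0 := by
    by_contra hpos
    push_neg at hpos
    obtain ⟨M, hM⟩ := exists_nat_gt ((-K0) / t0)
    have h1 := hmain M
    rw [haffine M] at h1
    rw [div_lt_iff₀ hpos] at hM
    linarith
  have hfac : 0 < rb j0 * d i0 := mul_pos (hrb j0) hd0
  by_contra hc
  push_neg at hc
  have : 0 < t0 := by
    rw [ht0]
    calc (0:ℝ) < (s * C k j0) * (rb j0 * d i0) := mul_pos hc hfac
      _ = s * (C k j0 * (rb j0 * d i0)) := by ring
  linarith

lemma exists_good_u {n ν : ℕ} (A B : Matrix (Fin n) (Fin ν) ℕ) (Γ : Matrix (Fin n) (Fin ν) ℝ)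
    (hΓ : ∀ i j, Γ i j = (B i j : ℝ) - (A i j : ℝ))
    (v : Fin ν → ℝ) (hv : ∀ j, 0 < v j) (hΓv : Γ.mulVec v = 0)
    (P : Finset (Fin n)) (hPne : P.Nonempty)
    (hsiphon : ∀ j, (∃ i ∈ P, 0 < B i j) → ∃ i ∈ P, 0 < A i j)
    (hcritical : ¬ ∃ lam : Fin n → ℝ, (∀ i, 0 ≤ lam i) ∧ lam ≠ 0 ∧
        (∀ i, lam i ≠ 0 → i ∈ P) ∧ Matrix.vecMul lam Γ = 0) :
    ∃ u : Fin ν → ℝ, (∀ j, 0 ≤ u j) ∧ (∀ j, u j ≠ 0 → ∃ i ∈ P, 0 < A i j) ∧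
      (∀ i ∈ P, 0 < (Γ.mulVec u) i) := by
  classical
  have hΓ0 : ∀ j, (¬ ∃ i ∈ P, 0 < A i j) → ∀ i ∈ P, Γ i j = 0 := by
    intro j hj i hiP
    have hA : A i j = 0 := by
      by_contra h
      exact hj ⟨i, hiP, Nat.pos_of_ne_zero h⟩
    have hB : B i j = 0 := by
      by_contra h
      exact hj (hsiphon j ⟨i, hiP, Nat.pos_of_ne_zero h⟩)
    rw [hΓ, hA, hB]; simp
  obtain ⟨i0, hi0⟩ := hPne
  have hJne : ∃ j, ∃ i ∈ P, 0 < A i j := by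
    by_contra hno
    push_neg at hno
    refine hcritical ⟨Pi.single i0 1, ?_, ?_, ?_, ?_⟩
    · intro i
      rcases eq_or_ne i i0 with rfl | h
      · simp
      · simp [Pi.single_apply, h]
    · intro h
      have := congrFun h i0
      simp at this
    · intro i hi
      rcases eq_or_ne i i0 with rfl | h
      · exact hi0
      · exact absurd (by simp [Pi.single_apply, h]) hi
    · funext j
      have hz : ∀ i ∈ P, Γ i j = 0 := by
        apply hΓ0
        intro ⟨i, hiP, hpos⟩
        exact absurd hpos (by simpa using hno j i hiP)
      simp only [Matrix.vecMul, dotProduct, Pi.single_apply]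
      rw [Finset.sum_eq_single i0]
      · simp [hz i0 hi0]
      · intro b _ hb; simp [hb]
      · intro h; exact absurd (Finset.mem_univ i0) h
  set Jset : Finset (Fin ν) := Finset.univ.filter (fun j => ∃ i ∈ P, 0 < A i j) with hJset
  set g : Fin ν → (Fin n → ℝ) := fun j i => if i ∈ P then Γ i j else 0 with hg
  set T : Set (Fin n → ℝ) := {y | ∃ w : Fin ν → ℝ, (∀ j, 0 ≤ w j) ∧
    (∀ j, w j ≠ 0 → j ∈ Jset) ∧ (∑ j, w j = 1) ∧ y = ∑ j, w j • g j} with hT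
  by_cases hgood : ∃ y ∈ T, ∀ i ∈ P, 0 < y i
  · obtain ⟨y, ⟨u, hu1, hu2, _, hu4⟩, hy⟩ := hgood
    refine ⟨u, hu1, ?_, ?_⟩
    · intro j hj
      have := hu2 j hj
      rw [hJset, Finset.mem_filter] at this
      exact this.2
    · intro i hiP
      have h1 : (Γ.mulVec u) i = y i := by
        rw [hu4]
        simp only [Matrix.mulVec, dotProduct, Finset.sum_apply, Pi.smul_apply,
          smul_eq_mul, hg]
        apply Finset.sum_congr rfl
        intro j _
        rw [if_pos hiP]; ring
      rw [h1]
      exact hy i hiP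
  · -- separation
    set Pos : Set (Fin n → ℝ) := {y | ∀ i ∈ P, 0 < y i} with hPos
    have hconvP : Convex ℝ Pos := by
      intro y hy z hz a b ha hb hab
      intro i hiP
      rcases eq_or_lt_of_le ha with rfl | ha'
      · simp only [zero_add] at hab
        simpa [hab] using mul_pos (by norm_num : (0:ℝ) < 1) (hz i hiP)
      · have h1 : 0 < a * y i := mul_pos ha' (hy i hiP)
        have h2 : 0 ≤ b * z i := mul_nonneg hb (hz i hiP).le
        simpa using add_pos_of_pos_of_nonneg h1 h2
    have hopenP : IsOpen Pos := by
      have : Pos = ⋂ i ∈ P, {y : Fin n → ℝ | 0 < y i} := by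
        ext y; simp [hPos]
      rw [this]
      exact isOpen_biInter_finset fun i _ => isOpen_lt continuous_const (continuous_apply i)
    have hconvT : Convex ℝ T := by
      rintro y ⟨w1, hw1n, hw1s, hw1t, rfl⟩ z ⟨w2, hw2n, hw2s, hw2t, rfl⟩ a b ha hb hab
      refine ⟨fun j => a * w1 j + b * w2 j, ?_, ?_, ?_, ?_⟩
      · intro j; exact add_nonneg (mul_nonneg ha (hw1n j)) (mul_nonneg hb (hw2n j))
      · intro j hj
        by_cases h1 : w1 j ≠ 0
        · exact hw1s j h1
        · push_neg at h1
          apply hw2s j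
          intro h2
          apply hj
          show a * w1 j + b * w2 j = 0
          rw [h1, h2]; ring
      · rw [Finset.sum_add_distrib, ← Finset.mul_sum, ← Finset.mul_sum, hw1t, hw2t]
        simpa using hab
      · rw [Finset.smul_sum, Finset.smul_sum, ← Finset.sum_add_distrib]
        apply Finset.sum_congr rfl
        intro j _
        simp only [smul_smul, ← add_smul]
    have hdisj : Disjoint Pos T := by
      rw [Set.disjoint_left]
      intro y hyP hyT
      exact hgood ⟨y, hyT, hyP⟩
    obtain ⟨f, u0, hfP, hfT⟩ := geometric_hahn_banach_open hconvP hopenP hconvT hdisj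
    set ones : Fin n → ℝ := fun _ => 1 with hones
    have honesP : ones ∈ Pos := fun i _ => zero_lt_one
    have hfdecomp : ∀ z : Fin n → ℝ, f z = ∑ i, z i * f (Pi.single i 1) := by
      intro z
      have h1 : z = ∑ i, Pi.single i (z i) := by
        rw [Finset.univ_sum_single]
      conv_lhs => rw [h1]
      rw [map_sum]
      apply Finset.sum_congr rfl
      intro i _
      have : Pi.single i (z i) = z i • (Pi.single i (1:ℝ) : Fin n → ℝ) := by
        funext i'
        rcases eq_or_ne i' i with rfl | h
        · simp
        · simp [Pi.single_apply, h]
      rw [this, map_smul, smul_eq_mul]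
    have hfz : ∀ z : Fin n → ℝ, (∀ i ∈ P, 0 ≤ z i) → f z ≤ 0 := by
      intro z hz
      by_contra h
      push_neg at h
      set t : ℝ := (|u0 - f ones| + 1) / f z with hts
      have ht : 0 < t := by positivity
      have hmem : ones + t • z ∈ Pos := by
        intro i hiP
        have : 0 ≤ t * z i := mul_nonneg ht.le (hz i hiP)
        simp only [Pi.add_apply, Pi.smul_apply, smul_eq_mul, hones]
        linarith
      have h2 := hfP _ hmem
      rw [map_add, map_smul, smul_eq_mul, hts, div_mul_cancel₀ _ (ne_of_gt h)] at h2
      have := le_abs_self (u0 - f ones)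
      linarith
    have hu0 : 0 ≤ u0 := by
      by_contra h
      push_neg at h
      have h2 : ∀ ε : ℝ, 0 < ε → ε * f ones < u0 := by
        intro ε hε
        have hmem : ε • ones ∈ Pos := by
          intro i hiP
          simp only [Pi.smul_apply, smul_eq_mul, hones, mul_one]
          exact hε
        have := hfP _ hmem
        rwa [map_smul, smul_eq_mul] at this
      have hfo : f ones < 0 := by
        have := h2 1 zero_lt_one
        linarith
      have h3 := h2 (u0 / (2 * f ones)) (div_pos_iff.2 (Or.inr ⟨h, by linarith⟩))
      have hne : f ones ≠ 0 := ne_of_lt hfo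
      have h4 : u0 / (2 * f ones) * f ones = u0 / 2 := by
        field_simp
      linarith
    set lam : Fin n → ℝ := fun i => if i ∈ P then -f (Pi.single i 1) else 0 with hlam
    have hlam_app : ∀ i, lam i = if i ∈ P then -f (Pi.single i 1) else 0 := fun i => rfl
    have hg_app : ∀ j i, g j i = if i ∈ P then Γ i j else 0 := fun j i => rfl
    have hlamnn : ∀ i, 0 ≤ lam i := by
      intro i
      rw [hlam_app]
      split
      · rename_i hiP
        have := hfz (Pi.single i 1) (by
          intro i' _
          rcases eq_or_ne i' i with rfl | h
          · simp
          · simp [Pi.single_apply, h])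
        linarith
      · exact le_rfl
    have hvm : ∀ j, Matrix.vecMul lam Γ j = -f (g j) := by
      intro j
      rw [hfdecomp (g j)]
      simp only [Matrix.vecMul, dotProduct]
      have hterm : ∀ i, lam i * Γ i j = -(g j i * f (Pi.single i 1)) := by
        intro i
        rw [hlam_app, hg_app]
        by_cases hiP : i ∈ P
        · simp only [if_pos hiP]; ring
        · simp only [if_neg hiP]; ring
      rw [Finset.sum_congr rfl (fun i _ => hterm i)]
      rw [Finset.sum_neg_distrib]
    have hgT : ∀ j ∈ Jset, g j ∈ T := by
      intro j hj
      refine ⟨fun j' => if j' = j then 1 else 0, ?_, ?_, ?_, ?_⟩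
      · intro j'
        by_cases h : j' = j <;> simp [h]
      · intro j' hj'
        by_cases h : j' = j
        · rw [h]; exact hj
        · simp [h] at hj'
      · simp
      · symm
        rw [Finset.sum_eq_single j]
        · simp
        · intro b _ hb; simp [hb]
        · intro h; exact absurd (Finset.mem_univ j) h
    have hle : ∀ j, Matrix.vecMul lam Γ j ≤ 0 := by
      intro j
      by_cases hj : j ∈ Jset
      · rw [hvm j]
        have := hfT _ (hgT j hj)
        linarith
      · have hnot : ¬ ∃ i ∈ P, 0 < A i j := by
          intro h
          exact hj (by rw [hJset, Finset.mem_filter]; exact ⟨Finset.mem_univ _, h⟩)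
        have : Matrix.vecMul lam Γ j = 0 := by
          simp only [Matrix.vecMul, dotProduct]
          apply Finset.sum_eq_zero
          intro i _
          by_cases hiP : i ∈ P
          · rw [hΓ0 j hnot i hiP, mul_zero]
          · rw [hlam_app, if_neg hiP, zero_mul]
        linarith [this.le]
    have hlamne : lam ≠ 0 := by
      intro h0
      have hfi : ∀ i, f (Pi.single i 1) = 0 := by
        intro i
        by_cases hiP : i ∈ P
        · have h1 := congrFun h0 i
          rw [hlam_app] at h1
          simp only [if_pos hiP, Pi.zero_apply] at h1
          linarith
        · have h1 := hfz (Pi.single i 1) (fun i' hi' => by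
            have hne : i' ≠ i := fun he => hiP (he ▸ hi')
            simp [Pi.single_apply, hne])
          have h2 := hfz (-(Pi.single i 1)) (fun i' hi' => by
            have hne : i' ≠ i := fun he => hiP (he ▸ hi')
            simp [Pi.single_apply, hne])
          rw [map_neg] at h2
          linarith
      obtain ⟨j1, hj1⟩ := hJne
      have hj1' : j1 ∈ Jset := by rw [hJset, Finset.mem_filter]; exact ⟨Finset.mem_univ _, hj1⟩
      have h3 := hfT _ (hgT j1 hj1')
      rw [hfdecomp (g j1)] at h3
      simp only [hfi, mul_zero, Finset.sum_const_zero] at h3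
      have h4 := hfP ones honesP
      rw [hfdecomp ones] at h4
      simp only [hfi, mul_zero, Finset.sum_const_zero] at h4
      linarith
    have hsum0 : ∑ j, Matrix.vecMul lam Γ j * v j = 0 := by
      have h1 := Matrix.dotProduct_mulVec lam Γ v
      rw [hΓv] at h1
      simp only [dotProduct_zero] at h1
      simpa [dotProduct] using h1.symm
    have hzero : ∀ j, Matrix.vecMul lam Γ j * v j = 0 := by
      have h1 := (Finset.sum_eq_zero_iff_of_nonpos (fun j _ =>
        mul_nonpos_iff.2 (Or.inr ⟨hle j, (hv j).le⟩))).1 hsum0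
      exact fun j => h1 j (Finset.mem_univ j)
    have hvm0 : Matrix.vecMul lam Γ = 0 := by
      funext j
      simp only [Pi.zero_apply]
      exact (mul_eq_zero.1 (hzero j)).resolve_right (hv j).ne'
    exact absurd ⟨lam, hlamnn, hlamne, fun i hi => by
      by_contra hiP
      exact hi (by rw [hlam_app, if_neg hiP]), hvm0⟩ hcritical

/-- Theorem 5.5, part 3 (convex ℓ∞ form): a conservative network satisfying AG with a
one-dimensional `ker Γ` and a critical siphon admits no convex
piecewise-linear-in-rates robust Lyapunov function `‖C R(x)‖_∞`. -/
theorem stmt15 {n ν : ℕ} (A B : Matrix (Fin n) (Fin ν) ℕ)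
    (Γ : Matrix (Fin n) (Fin ν) ℝ)
    (hΓ : ∀ i j, Γ i j = (B i j : ℝ) - (A i j : ℝ))
    (w : Fin n → ℝ) (hw : ∀ i, 0 < w i) (hcons : Matrix.vecMul w Γ = 0)
    (hAG : ∃ v : Fin ν → ℝ, (∀ j, 0 < v j) ∧ Γ.mulVec v = 0)
    (hker1 : Module.finrank ℝ ↥(LinearMap.ker Γ.mulVecLin) = 1)
    (P : Finset (Fin n)) (hPne : P.Nonempty)
    (hsiphon : ∀ j, (∃ i ∈ P, 0 < B i j) → ∃ i ∈ P, 0 < A i j)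
    (hcritical : ¬ ∃ lam : Fin n → ℝ, (∀ i, 0 ≤ lam i) ∧ lam ≠ 0 ∧
        (∀ i, lam i ≠ 0 → i ∈ P) ∧ Matrix.vecMul lam Γ = 0) :
    ¬ ∃ (q : ℕ) (C : Matrix (Fin q) (Fin ν) ℝ),
        (∀ r : Fin ν → ℝ, C.mulVec r = 0 ↔ Γ.mulVec r = 0) ∧
        ∀ R, IsAdmissible A R → ∀ x : Fin n → ℝ, (∀ i, 0 ≤ x i) →
          dini (fun y => ‖C.mulVec (R y)‖) (fun y => Γ.mulVec (R y)) x ≤ 0 := by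
  rintro ⟨q, C, hker, hLyap⟩
  classical
  obtain ⟨v, hv, hΓv⟩ := hAG
  obtain ⟨u, hu_nn, hu_supp, hu_pos⟩ := exists_good_u A B Γ hΓ v hv hΓv P hPne hsiphon hcritical
  set d : Fin n → ℝ := Γ.mulVec u with hdd
  set ons : Fin ν → ℝ := fun _ => 1 with honsdef
  set b : Fin n → ℝ := Γ.mulVec ons with hbb
  obtain ⟨i0, hi0⟩ := hPne
  have hCu : C.mulVec u ≠ 0 := by
    intro h
    have hΓu : Γ.mulVec u = 0 := (hker u).1 h
    have h2 := hu_pos i0 hi0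
    rw [hdd, hΓu] at h2
    simp at h2
  have hN : 0 < ‖C.mulVec u‖ := norm_pos_iff.2 hCu
  set N : ℝ := ‖C.mulVec u‖ with hNdef
  set δ : ℝ := P.inf' ⟨i0, hi0⟩ (fun i => d i) with hδdef
  have hδpos : 0 < δ := by
    rw [hδdef]
    refine (Finset.lt_inf'_iff _).2 ?_
    intro i hi
    exact hu_pos i hi
  set T : ℝ := (1 + ‖b‖) / δ with hTdef
  have hTnn : 0 ≤ T := div_nonneg (by positivity) hδpos.le
  set r : ℝ → Fin ν → ℝ := fun t => ons + t • u with hrdef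
  have hr_app : ∀ t j, r t j = 1 + t * u j := fun t j => rfl
  have hrpos : ∀ t, 0 ≤ t → ∀ j, 0 < r t j := by
    intro t ht j
    rw [hr_app]
    have : 0 ≤ t * u j := mul_nonneg ht (hu_nn j)
    linarith
  have hΓr : ∀ t, Γ.mulVec (r t) = b + t • d := by
    intro t
    rw [hrdef]
    rw [Matrix.mulVec_add, Matrix.mulVec_smul, hbb, hdd]
  have hdpos : ∀ t, T ≤ t → ∀ i ∈ P, 0 < (Γ.mulVec (r t)) i := by
    intro t ht i hi
    rw [hΓr]
    simp only [Pi.add_apply, Pi.smul_apply, smul_eq_mul]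
    have h1 : δ ≤ d i := Finset.inf'_le _ hi
    have h2 : T * δ ≤ t * d i :=
      mul_le_mul ht h1 hδpos.le (le_trans hTnn ht)
    rw [hTdef, div_mul_cancel₀ _ (ne_of_gt hδpos)] at h2
    have h3 : |b i| ≤ ‖b‖ := by
      have := norm_le_pi_norm b i
      rwa [Real.norm_eq_abs] at this
    have h4 := neg_abs_le (b i)
    linarith
  have hconstraint : ∀ t, T ≤ t → ∀ k : Fin q, ∀ s : ℝ, (s = 1 ∨ s = -1) →
      s * (C.mulVec (r t)) k = ‖C.mulVec (r t)‖ → s * (C.mulVec u) k ≤ 0 := by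
    intro t ht k s hs hk
    have hrt : ∀ j, 0 < r t j := hrpos t (le_trans hTnn ht)
    have hterm : ∀ j, u j ≠ 0 → s * C k j ≤ 0 := by
      intro j hj
      obtain ⟨i1, hi1P, hi1A⟩ := hu_supp j hj
      exact key_constraint A C Γ hLyap (r t) hrt k s hs hk j i1 hi1A (hdpos t ht i1 hi1P)
    have hmv : (C.mulVec u) k = ∑ j, C k j * u j := by
      simp [Matrix.mulVec, dotProduct]
    rw [hmv, Finset.mul_sum]
    apply Finset.sum_nonpos
    intro j _
    by_cases hj : u j = 0
    · rw [hj]; simp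
    · have h1 := hterm j hj
      have h2 := hu_nn j
      calc s * (C k j * u j) = (s * C k j) * u j := by ring
        _ ≤ 0 := mul_nonpos_iff.2 (Or.inr ⟨h1, h2⟩)
  have hmono : ∀ t, T ≤ t → ‖C.mulVec (r t)‖ ≤ ‖C.mulVec (r T)‖ := by
    intro t ht
    by_cases hz : C.mulVec (r t) = 0
    · rw [hz, norm_zero]
      exact norm_nonneg _
    · have hqne : Nonempty (Fin q) := by
        rcases isEmpty_or_nonempty (Fin q) with he | h
        · exact absurd (Subsingleton.elim (C.mulVec (r t)) 0) hz
        · exact h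
      obtain ⟨k, _, hk⟩ := Finset.exists_max_image Finset.univ
        (fun k => |(C.mulVec (r t)) k|) (Finset.univ_nonempty (α := Fin q))
      have hnk : ‖C.mulVec (r t)‖ = |(C.mulVec (r t)) k| := by
        apply le_antisymm
        · refine (pi_norm_le_iff_of_nonneg (abs_nonneg _)).2 ?_
          intro i
          rw [Real.norm_eq_abs]
          exact hk i (Finset.mem_univ i)
        · have := norm_le_pi_norm (C.mulVec (r t)) k
          rwa [Real.norm_eq_abs] at this
      have hsexists : ∃ s : ℝ, (s = 1 ∨ s = -1) ∧
          s * (C.mulVec (r t)) k = |(C.mulVec (r t)) k| := by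
        by_cases h : 0 ≤ (C.mulVec (r t)) k
        · exact ⟨1, Or.inl rfl, by rw [one_mul, abs_of_nonneg h]⟩
        · exact ⟨-1, Or.inr rfl, by rw [neg_one_mul, abs_of_neg (lt_of_not_ge h)]⟩
      obtain ⟨s, hs, hsk⟩ := hsexists
      have hcu := hconstraint t ht k s hs (by rw [hsk, hnk])
      have habs : ∀ x : ℝ, s * x ≤ |x| := by
        rcases hs with rfl | rfl
        · intro x; rw [one_mul]; exact le_abs_self x
        · intro x; rw [neg_one_mul]; exact neg_le_abs x
      have hrT : C.mulVec (r t) = C.mulVec (r T) + (t - T) • C.mulVec u := by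
        have hre : r t = r T + (t - T) • u := by
          funext j
          simp only [Pi.add_apply, Pi.smul_apply, smul_eq_mul, hr_app]
          ring
        rw [hre, Matrix.mulVec_add, Matrix.mulVec_smul]
      have hTk : |(C.mulVec (r T)) k| ≤ ‖C.mulVec (r T)‖ := by
        have := norm_le_pi_norm (C.mulVec (r T)) k
        rwa [Real.norm_eq_abs] at this
      have hstep : s * (C.mulVec (r t)) k
          = s * (C.mulVec (r T)) k + (t - T) * (s * (C.mulVec u) k) := by
        rw [hrT]
        simp only [Pi.add_apply, Pi.smul_apply, smul_eq_mul]
        ring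
      have hneg : (t - T) * (s * (C.mulVec u) k) ≤ 0 :=
        mul_nonpos_iff.2 (Or.inl ⟨sub_nonneg.2 ht, hcu⟩)
      calc ‖C.mulVec (r t)‖ = s * (C.mulVec (r t)) k := by rw [hnk, ← hsk]
        _ ≤ s * (C.mulVec (r T)) k := by rw [hstep]; linarith
        _ ≤ |(C.mulVec (r T)) k| := habs _
        _ ≤ ‖C.mulVec (r T)‖ := hTk
  have hgrow : ∀ t, 0 ≤ t → t * N - ‖C.mulVec ons‖ ≤ ‖C.mulVec (r t)‖ := by
    intro t ht
    have h1 : C.mulVec (r t) = C.mulVec ons + t • C.mulVec u := by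
      rw [hrdef, Matrix.mulVec_add, Matrix.mulVec_smul]
    have h2 : t • C.mulVec u = C.mulVec (r t) - C.mulVec ons := by
      rw [h1]; abel
    have h3 : ‖t • C.mulVec u‖ ≤ ‖C.mulVec (r t)‖ + ‖C.mulVec ons‖ := by
      rw [h2]
      exact norm_sub_le _ _
    rw [norm_smul, Real.norm_eq_abs, abs_of_nonneg ht] at h3
    rw [← hNdef] at h3
    linarith
  set t1 : ℝ := max T ((‖C.mulVec (r T)‖ + ‖C.mulVec ons‖ + 1) / N) with ht1def
  have h5 := hmono t1 (le_max_left _ _)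
  have h6 := hgrow t1 (le_trans hTnn (le_max_left _ _))
  have h7 : ‖C.mulVec (r T)‖ + ‖C.mulVec ons‖ + 1 ≤ t1 * N := by
    have h8 : (‖C.mulVec (r T)‖ + ‖C.mulVec ons‖ + 1) / N ≤ t1 := le_max_right _ _
    rwa [div_le_iff₀ hN] at h8
  linarith
end

section
/- Let C ∈ ℝ^{q×ν} and suppose that for every ℓ = 1,…,s there exists Λ̃^ℓ ∈ ℝ^{q×q} with C Γ^ℓ = Λ̃^ℓ C and μ_∞(Λ̃^ℓ) := max_k ( Λ̃^ℓ_{kk} + Σ_{j≠k} |Λ̃^ℓ_{kj}| ) ≤ 0. Then for every admissible kinetics R ∈ K_A and every x ∈ ℝ≥0ⁿ, the matrix J₁(x) = (∂R/∂x)(x) Γ ∈ ℝ^{ν×ν} satisfies μ_C(J₁(x)) ≤ 0, where μ_C(J) := limsup_{h→0⁺} (1/h) ( sup{ ‖C (I + h J) ξ‖_∞ : ξ ∈ ℝ^ν, ‖C ξ‖_∞ ≤ 1 } − 1 ); in particular, for every h ≥ 0 and every ξ ∈ ℝ^ν, ‖C(I + h J₁(x))ξ‖_∞ ≤ ‖I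 + h Σ_ℓ ρ_ℓ Λ̃^ℓ‖_∞ ‖Cξ‖_∞ with ρ_ℓ = ∂R_{j_ℓ}/∂x_{i_ℓ}(x) ≥ 0, where ‖·‖_∞ on matrices denotes the operator norm induced by the ℓ∞ vector norm. -/
open Filter Set Topology

/-- Operator norm on square matrices induced by the ℓ∞ vector norm. -/
noncomputable def opNormInf {q : ℕ} (M : Matrix (Fin q) (Fin q) ℝ) : ℝ :=
  sSup {a : ℝ | ∃ v : Fin q → ℝ, ‖v‖ ≤ 1 ∧ a = ‖M.mulVec v‖}

/-- Row-sum bound for the sup norm of a matrix-vector product. -/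
lemma mulVec_norm_le_row {q m : ℕ} (M : Matrix (Fin q) (Fin m) ℝ) {c : ℝ} (hc : 0 ≤ c)
    (hrow : ∀ k, ∑ j, |M k j| ≤ c) (v : Fin m → ℝ) : ‖M.mulVec v‖ ≤ c * ‖v‖ := by
  rw [pi_norm_le_iff_of_nonneg (by positivity)]
  intro k
  have hk : M.mulVec v k = ∑ j, M k j * v j := by simp [Matrix.mulVec, dotProduct]
  rw [Real.norm_eq_abs, hk]
  calc |∑ j, M k j * v j| ≤ ∑ j, |M k j * v j| := Finset.abs_sum_le_sum_abs _ _
    _ ≤ ∑ j, |M k j| * ‖v‖ := by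
        refine Finset.sum_le_sum fun j _ => ?_
        rw [abs_mul]
        exact mul_le_mul_of_nonneg_left ((Real.norm_eq_abs (v j)) ▸ norm_le_pi_norm v j)
          (abs_nonneg _)
    _ = (∑ j, |M k j|) * ‖v‖ := (Finset.sum_mul _ _ _).symm
    _ ≤ c * ‖v‖ := mul_le_mul_of_nonneg_right (hrow k) (norm_nonneg _)

lemma opNormInf_bddAbove {q : ℕ} (M : Matrix (Fin q) (Fin q) ℝ) :
    BddAbove {a : ℝ | ∃ v : Fin q → ℝ, ‖v‖ ≤ 1 ∧ a = ‖M.mulVec v‖} := by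
  refine ⟨∑ k, ∑ j, |M k j|, fun a ⟨v, hv, ha⟩ => ?_⟩
  have hb : ‖M.mulVec v‖ ≤ (∑ k, ∑ j, |M k j|) * ‖v‖ :=
    mulVec_norm_le_row M (by positivity) (fun k => Finset.single_le_sum
      (f := fun k => ∑ j, |M k j|)
      (fun k _ => Finset.sum_nonneg fun j _ => abs_nonneg _) (Finset.mem_univ k)) v
  subst ha
  calc ‖M.mulVec v‖ ≤ (∑ k, ∑ j, |M k j|) * ‖v‖ := hb
    _ ≤ (∑ k, ∑ j, |M k j|) * 1 := by
        exact mul_le_mul_of_nonneg_left hv (by positivity)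
    _ = _ := mul_one _

lemma zero_mem_opNormInf_set {q : ℕ} (M : Matrix (Fin q) (Fin q) ℝ) :
    (0:ℝ) ∈ {a : ℝ | ∃ v : Fin q → ℝ, ‖v‖ ≤ 1 ∧ a = ‖M.mulVec v‖} :=
  ⟨0, by simp, by simp [Matrix.mulVec_zero]⟩

lemma norm_mulVec_le_opNormInf {q : ℕ} (M : Matrix (Fin q) (Fin q) ℝ) (v : Fin q → ℝ) :
    ‖M.mulVec v‖ ≤ opNormInf M * ‖v‖ := by
  have hbdd := opNormInf_bddAbove M
  have h0 : 0 ≤ opNormInf M := le_csSup hbdd (zero_mem_opNormInf_set M)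
  rcases eq_or_lt_of_le (norm_nonneg v) with hv | hv
  · have : v = 0 := norm_eq_zero.mp hv.symm
    simp [this, Matrix.mulVec_zero, ← hv]
  · have hmem : ‖v‖⁻¹ * ‖M.mulVec v‖ ∈
        {a : ℝ | ∃ u : Fin q → ℝ, ‖u‖ ≤ 1 ∧ a = ‖M.mulVec u‖} := by
      refine ⟨‖v‖⁻¹ • v, ?_, ?_⟩
      · rw [norm_smul, norm_inv, norm_norm, inv_mul_cancel₀ hv.ne']
      · rw [Matrix.mulVec_smul, norm_smul, norm_inv, norm_norm]
    have hle : ‖v‖⁻¹ * ‖M.mulVec v‖ ≤ opNormInf M := le_csSup hbdd hmem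
    calc ‖M.mulVec v‖ = (‖v‖⁻¹ * ‖M.mulVec v‖) * ‖v‖ := by
          field_simp
    _ ≤ opNormInf M * ‖v‖ := mul_le_mul_of_nonneg_right hle (norm_nonneg v)

/-- Contraction theorem, part 1: if `C Γ^ℓ = Λ̃^ℓ C` with `μ_∞(Λ̃^ℓ) ≤ 0` for all `ℓ`,
then the logarithmic norm `μ_C` of the extent-of-reaction Jacobian
`J₁(x) = ∂R/∂x(x) Γ` is nonpositive, together with the corresponding explicit
`ℓ∞`-norm bound. -/
theorem stmt17 {n ν q : ℕ} (A : Matrix (Fin n) (Fin ν) ℕ)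
    (Γ : Matrix (Fin n) (Fin ν) ℝ)
    (C : Matrix (Fin q) (Fin ν) ℝ)
    (Λt : Fin n → Fin ν → Matrix (Fin q) (Fin q) ℝ)
    (hΛ : ∀ i j, 0 < A i j →
      C * GammaEll Γ i j = Λt i j * C ∧
      ∀ k, Λt i j k k + ∑ k' ∈ Finset.univ.erase k, |Λt i j k k'| ≤ 0) :
    ∀ R, IsAdmissible A R → ∀ x : Fin n → ℝ, (∀ i, 0 ≤ x i) →
      (Filter.limsup (fun h : ℝ =>
          (sSup {a : ℝ | ∃ ξ : Fin ν → ℝ, ‖C.mulVec ξ‖ ≤ 1 ∧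
              a = ‖C.mulVec ((1 + h • ((Matrix.of fun (j : Fin ν) (i : Fin n) =>
                pd R x j i) * Γ)).mulVec ξ)‖} - 1) / h)
          (nhdsWithin 0 (Set.Ioi 0)) ≤ 0)
      ∧ ∀ h : ℝ, 0 ≤ h → ∀ ξ : Fin ν → ℝ,
          ‖C.mulVec ((1 + h • ((Matrix.of fun (j : Fin ν) (i : Fin n) =>
              pd R x j i) * Γ)).mulVec ξ)‖ ≤
            opNormInf (1 + h • ∑ i : Fin n, ∑ j : Fin ν,
              (if 0 < A i j then pd R x j i • Λt i j else 0)) * ‖C.mulVec ξ‖ := by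
  intro R hR x hx
  set J : Matrix (Fin ν) (Fin ν) ℝ := (Matrix.of fun (j : Fin ν) (i : Fin n) => pd R x j i) * Γ
    with hJdef
  set Λ : Matrix (Fin q) (Fin q) ℝ :=
    ∑ i : Fin n, ∑ j : Fin ν, (if 0 < A i j then pd R x j i • Λt i j else 0) with hLdef
  -- J as a sum of rank-one matrices
  have hsum : J = ∑ i : Fin n, ∑ j : Fin ν, pd R x j i • GammaEll Γ i j := by
    ext j' k
    simp only [hJdef, Matrix.mul_apply, Matrix.of_apply, Matrix.sum_apply, Matrix.smul_apply,
      GammaEll, Matrix.vecMulVec_apply, Pi.single_apply, smul_eq_mul, mul_ite, ite_mul,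
      one_mul, zero_mul, mul_zero, Finset.sum_ite_eq]
    simp
  -- key intertwining identity
  have key : C * J = Λ * C := by
    rw [hsum, Matrix.mul_sum, hLdef, Matrix.sum_mul]
    refine Finset.sum_congr rfl fun i _ => ?_
    rw [Matrix.mul_sum, Matrix.sum_mul]
    refine Finset.sum_congr rfl fun j _ => ?_
    by_cases hij : 0 < A i j
    · rw [if_pos hij, Matrix.mul_smul, (hΛ i j hij).1, Matrix.smul_mul]
    · have h0 : A i j = 0 := Nat.eq_zero_of_not_pos hij
      rw [if_neg hij, hR.deriv_zero x hx i j h0]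
      simp
  have mulvec_eq : ∀ (h : ℝ) (ξ : Fin ν → ℝ),
      C.mulVec ((1 + h • J).mulVec ξ) = (1 + h • Λ).mulVec (C.mulVec ξ) := by
    intro h ξ
    rw [Matrix.mulVec_mulVec, Matrix.mulVec_mulVec]
    rw [Matrix.mul_add, Matrix.mul_one, Matrix.add_mul, Matrix.one_mul, Matrix.mul_smul,
      key, Matrix.smul_mul]
  have hΛentry : ∀ k k', Λ k k' =
      ∑ i : Fin n, ∑ j : Fin ν, (if 0 < A i j then pd R x j i * Λt i j k k' else 0) := by
    intro k k'
    rw [hLdef]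
    simp only [Matrix.sum_apply]
    refine Finset.sum_congr rfl fun i _ => Finset.sum_congr rfl fun j _ => ?_
    by_cases hij : 0 < A i j <;> simp [hij]
  have hρ : ∀ i j, 0 < A i j → 0 ≤ pd R x j i := fun i j hij => hR.deriv_nonneg x hx i j hij
  -- the logarithmic ∞-norm condition for Λ
  have hmu : ∀ k, Λ k k + ∑ k' ∈ Finset.univ.erase k, |Λ k k'| ≤ 0 := by
    intro k
    have habs : ∀ k', |Λ k k'| ≤
        ∑ i : Fin n, ∑ j : Fin ν, (if 0 < A i j then pd R x j i * |Λt i j k k'| else 0) := by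
      intro k'
      rw [hΛentry]
      refine (Finset.abs_sum_le_sum_abs _ _).trans (Finset.sum_le_sum fun i _ => ?_)
      refine (Finset.abs_sum_le_sum_abs _ _).trans (Finset.sum_le_sum fun j _ => ?_)
      by_cases hij : 0 < A i j
      · simp [hij, abs_mul, abs_of_nonneg (hρ i j hij)]
      · simp [hij]
    calc Λ k k + ∑ k' ∈ Finset.univ.erase k, |Λ k k'|
        ≤ (∑ i : Fin n, ∑ j : Fin ν, (if 0 < A i j then pd R x j i * Λt i j k k else 0)) +
          ∑ k' ∈ Finset.univ.erase k, ∑ i : Fin n, ∑ j : Fin ν,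
            (if 0 < A i j then pd R x j i * |Λt i j k k'| else 0) :=
          add_le_add (le_of_eq (hΛentry k k)) (Finset.sum_le_sum fun k' _ => habs k')
      _ = ∑ i : Fin n, ∑ j : Fin ν, (if 0 < A i j then
            pd R x j i * (Λt i j k k + ∑ k' ∈ Finset.univ.erase k, |Λt i j k k'|) else 0) := by
          have hsplit : ∀ i j, (if 0 < A i j then
              pd R x j i * (Λt i j k k + ∑ k' ∈ Finset.univ.erase k, |Λt i j k k'|) else 0)
              = (if 0 < A i j then pd R x j i * Λt i j k k else 0)
                + ∑ k' ∈ Finset.univ.erase k,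
                  (if 0 < A i j then pd R x j i * |Λt i j k k'| else 0) := by
            intro i j
            by_cases hij : 0 < A i j
            · simp only [if_pos hij]
              rw [mul_add, Finset.mul_sum]
            · simp only [if_neg hij]
              simp
          have hswap : ∑ k' ∈ Finset.univ.erase k, ∑ i : Fin n, ∑ j : Fin ν,
                (if 0 < A i j then pd R x j i * |Λt i j k k'| else 0)
              = ∑ i : Fin n, ∑ j : Fin ν, ∑ k' ∈ Finset.univ.erase k,
                (if 0 < A i j then pd R x j i * |Λt i j k k'| else 0) := by
            rw [Finset.sum_comm]
            exact Finset.sum_congr rfl fun i _ => Finset.sum_comm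
          simp only [hsplit, Finset.sum_add_distrib, hswap]
      _ ≤ 0 := by
          refine Finset.sum_nonpos fun i _ => Finset.sum_nonpos fun j _ => ?_
          by_cases hij : 0 < A i j
          · rw [if_pos hij]
            exact mul_nonpos_of_nonneg_of_nonpos (hρ i j hij) ((hΛ i j hij).2 k)
          · simp [hij]
  constructor
  · -- limsup part
    set B : ℝ := (∑ k : Fin q, |Λ k k|) + 1 with hBdef
    have hB : 0 < B := by positivity
    have hdiag : ∀ k, |Λ k k| < B := by
      intro k
      have : |Λ k k| ≤ ∑ k', |Λ k' k'| :=
        Finset.single_le_sum (f := fun k' => |Λ k' k'|)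
          (fun k' _ => abs_nonneg _) (Finset.mem_univ k)
      linarith
    have hev : ∀ᶠ h in nhdsWithin (0:ℝ) (Set.Ioi 0),
        (sSup {a : ℝ | ∃ ξ : Fin ν → ℝ, ‖C.mulVec ξ‖ ≤ 1 ∧
            a = ‖C.mulVec ((1 + h • J).mulVec ξ)‖} - 1) / h ≤ 0 := by
      have hmem : Set.Ioo (0:ℝ) (1/B) ∈ nhdsWithin (0:ℝ) (Set.Ioi 0) :=
        Ioo_mem_nhdsGT_of_mem ⟨le_refl 0, by positivity⟩
      filter_upwards [hmem] with h hh
      obtain ⟨hh0, hh1⟩ := hh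
      -- row sums of 1 + h • Λ are ≤ 1
      have hrow : ∀ k, ∑ j, |(1 + h • Λ) k j| ≤ 1 := by
        intro k
        have hsplit : ∑ j, |(1 + h • Λ) k j| =
            |(1 + h • Λ) k k| + ∑ j ∈ Finset.univ.erase k, |(1 + h • Λ) k j| :=
          (Finset.add_sum_erase _ _ (Finset.mem_univ k)).symm
        have hkk : (1 + h • Λ) k k = 1 + h * Λ k k := by
          simp [Matrix.add_apply, Matrix.one_apply, Matrix.smul_apply]
        have hoff : ∀ j ∈ Finset.univ.erase k, |(1 + h • Λ) k j| = h * |Λ k j| := by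
          intro j hj
          have hjk : j ≠ k := Finset.ne_of_mem_erase hj
          simp [Matrix.add_apply, Matrix.one_apply, Matrix.smul_apply, hjk.symm, abs_mul,
            abs_of_nonneg hh0.le]
        have hpos : 0 ≤ 1 + h * Λ k k := by
          have h1 : h * |Λ k k| ≤ (1/B) * B := by
            apply mul_le_mul hh1.le (hdiag k).le (abs_nonneg _) (by positivity)
          rw [one_div_mul_cancel hB.ne'] at h1
          have := neg_abs_le (Λ k k)
          nlinarith [abs_nonneg (Λ k k)]
        rw [hsplit, hkk, abs_of_nonneg hpos, Finset.sum_congr rfl hoff, ← Finset.mul_sum]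
        nlinarith [hmu k, Finset.sum_nonneg (fun k' (_ : k' ∈ Finset.univ.erase k) =>
          abs_nonneg (Λ k k'))]
      have hsup : sSup {a : ℝ | ∃ ξ : Fin ν → ℝ, ‖C.mulVec ξ‖ ≤ 1 ∧
          a = ‖C.mulVec ((1 + h • J).mulVec ξ)‖} ≤ 1 := by
        refine csSup_le ⟨0, 0, by simp, by simp [Matrix.mulVec_zero]⟩ ?_
        rintro a ⟨ξ, hξ, rfl⟩
        rw [mulvec_eq]
        calc ‖(1 + h • Λ).mulVec (C.mulVec ξ)‖ ≤ 1 * ‖C.mulVec ξ‖ :=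
              mulVec_norm_le_row _ zero_le_one hrow _
          _ ≤ 1 := by rw [one_mul]; exact hξ
      exact div_nonpos_of_nonpos_of_nonneg (by linarith) hh0.le
    rw [Filter.limsup_eq]
    by_cases hbd : BddBelow {a : ℝ | ∀ᶠ (h : ℝ) in nhdsWithin (0:ℝ) (Set.Ioi 0),
        (sSup {a : ℝ | ∃ ξ : Fin ν → ℝ, ‖C.mulVec ξ‖ ≤ 1 ∧
            a = ‖C.mulVec ((1 + h • J).mulVec ξ)‖} - 1) / h ≤ a}
    · exact csInf_le hbd hev
    · rw [Real.sInf_of_not_bddBelow hbd]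
  · intro h _ ξ
    rw [mulvec_eq]
    exact norm_mulVec_le_opNormInf _ _
end

section
/- Let B ∈ ℝ^{q×n}, let D be a matrix whose columns form a basis of ker Γᵀ, and suppose that for every ℓ = 1,…,s there exist Λ̃^ℓ ∈ ℝ^{q×q} with μ_∞(Λ̃^ℓ) := max_k ( Λ̃^ℓ_{kk} + Σ_{j≠k} |Λ̃^ℓ_{kj}| ) ≤ 0 and a matrix Y^ℓ such that B (Γ e_{j_ℓ}) e_{i_ℓ}ᵀ = Λ̃^ℓ B + Y^ℓ Dᵀ, where Γ e_j is the j-th column of Γ and e_i the i-th standard basis vector of ℝⁿ. Then for every admissible kinetics R ∈ K_A and every x ∈ ℝ≥0ⁿ, the matrix J₂(x) = Γ (∂R/∂x)(x) ∈ ℝ^{n×n} satisfies limsup_{h→0⁺} (1/h) ( sup{ ‖B (I + h J₂(x)) z‖_∞ : z ∈ im Γ, ‖B z‖_∞ ≤ 1 } − 1 ) ≤ 0; in particular, for every h ≥ 0 and every z ∈ im Γ, ‖B(I + h J₂(x)) z‖_∞ ≤ ‖I + h Σ_ℓ ρ_ℓ Λ̃^ℓ‖_∞ ‖B z‖_∞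 with ρ_ℓ = ∂R_{j_ℓ}/∂x_{i_ℓ}(x) ≥ 0, where ‖·‖_∞ on matrices denotes the operator norm induced by the ℓ∞ vector norm. -/
open Filter Set Topology

lemma sum_mulVec' {ι : Type*} {m' n' : ℕ} (s : Finset ι) (A : ι → Matrix (Fin m') (Fin n') ℝ)
    (v : Fin n' → ℝ) : (∑ i ∈ s, A i).mulVec v = ∑ i ∈ s, (A i).mulVec v := by
  ext k
  simp only [Matrix.mulVec, dotProduct, Finset.sum_apply, Matrix.sum_apply,
    Finset.sum_mul]
  rw [Finset.sum_comm]

lemma mul_vecMulVec' {m' n' p' : ℕ} (B : Matrix (Fin m') (Fin n') ℝ) (u : Fin n' → ℝ)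
    (w : Fin p' → ℝ) : B * Matrix.vecMulVec u w = Matrix.vecMulVec (B.mulVec u) w := by
  ext a b
  simp only [Matrix.mul_apply, Matrix.vecMulVec_apply, Matrix.mulVec, dotProduct,
    Finset.sum_mul, mul_assoc]

lemma rowsum_mulVec_le {q : ℕ} (N : Matrix (Fin q) (Fin q) ℝ) (c : ℝ) (hc : 0 ≤ c)
    (h : ∀ k, ∑ j, |N k j| ≤ c) (v : Fin q → ℝ) : ‖N.mulVec v‖ ≤ c * ‖v‖ := by
  rw [pi_norm_le_iff_of_nonneg (mul_nonneg hc (norm_nonneg v))]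
  intro k
  calc ‖N.mulVec v k‖ = |∑ j, N k j * v j| := rfl
    _ ≤ ∑ j, |N k j * v j| := Finset.abs_sum_le_sum_abs _ _
    _ ≤ ∑ j, |N k j| * ‖v‖ := by
        refine Finset.sum_le_sum fun j _ => ?_
        rw [abs_mul]
        exact mul_le_mul_of_nonneg_left (norm_le_pi_norm v j) (abs_nonneg _)
    _ = (∑ j, |N k j|) * ‖v‖ := (Finset.sum_mul _ _ _).symm
    _ ≤ c * ‖v‖ := mul_le_mul_of_nonneg_right (h k) (norm_nonneg v)

lemma mulVec_le_opNormInf {q : ℕ} (N : Matrix (Fin q) (Fin q) ℝ) (v : Fin q → ℝ) :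
    ‖N.mulVec v‖ ≤ opNormInf N * ‖v‖ := by
  set C : ℝ := ∑ k, ∑ j, |N k j| with hC
  have hC0 : 0 ≤ C := Finset.sum_nonneg fun k _ => Finset.sum_nonneg fun j _ => abs_nonneg _
  have hrow : ∀ k, ∑ j, |N k j| ≤ C :=
    fun k => Finset.single_le_sum (f := fun k' => ∑ j, |N k' j|)
      (fun k' _ => Finset.sum_nonneg fun j _ => abs_nonneg _) (Finset.mem_univ k)
  have hbdd : BddAbove {a : ℝ | ∃ v : Fin q → ℝ, ‖v‖ ≤ 1 ∧ a = ‖N.mulVec v‖} := by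
    refine ⟨C, fun a ha => ?_⟩
    obtain ⟨w, hw, rfl⟩ := ha
    calc ‖N.mulVec w‖ ≤ C * ‖w‖ := rowsum_mulVec_le N C hC0 hrow w
      _ ≤ C * 1 := mul_le_mul_of_nonneg_left hw hC0
      _ = C := mul_one C
  rcases eq_or_ne v 0 with rfl | hv
  · simp [Matrix.mulVec_zero]
  · have hv0 : (0:ℝ) < ‖v‖ := norm_pos_iff.mpr hv
    have hu : ‖(‖v‖⁻¹ • v)‖ = 1 := by
      rw [norm_smul, norm_inv, norm_norm, inv_mul_cancel₀ hv0.ne']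
    have hmem : ‖N.mulVec (‖v‖⁻¹ • v)‖ ∈
        {a : ℝ | ∃ w : Fin q → ℝ, ‖w‖ ≤ 1 ∧ a = ‖N.mulVec w‖} :=
      ⟨_, le_of_eq hu, rfl⟩
    have hle : ‖N.mulVec (‖v‖⁻¹ • v)‖ ≤ opNormInf N := le_csSup hbdd hmem
    rw [Matrix.mulVec_smul, norm_smul, norm_inv, norm_norm] at hle
    calc ‖N.mulVec v‖ = ‖v‖ * (‖v‖⁻¹ * ‖N.mulVec v‖) := by field_simp
      _ ≤ ‖v‖ * opNormInf N := mul_le_mul_of_nonneg_left hle hv0.le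
      _ = opNormInf N * ‖v‖ := mul_comm _ _

/-- Contraction theorem, part 2: if `B (Γ e_{j_ℓ}) e_{i_ℓ}ᵀ = Λ̃^ℓ B + Y^ℓ Dᵀ` with
`μ_∞(Λ̃^ℓ) ≤ 0` (columns of `D` a basis of `ker Γᵀ`), then the species-space Jacobian
`J₂(x) = Γ ∂R/∂x(x)` has nonpositive logarithmic norm with respect to the semi-norm
`z ↦ ‖Bz‖_∞` restricted to `im Γ`, together with the explicit `ℓ∞`-norm bound. -/
theorem stmt18 {n ν q d : ℕ} (A : Matrix (Fin n) (Fin ν) ℕ)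
    (Γ : Matrix (Fin n) (Fin ν) ℝ)
    (Bm : Matrix (Fin q) (Fin n) ℝ) (D : Matrix (Fin n) (Fin d) ℝ)
    (hD1 : LinearIndependent ℝ (fun k : Fin d => (fun i : Fin n => D i k)))
    (hD2 : Submodule.span ℝ (Set.range (fun k : Fin d => (fun i : Fin n => D i k)))
        = LinearMap.ker (Matrix.mulVecLin Γ.transpose))
    (Λt : Fin n → Fin ν → Matrix (Fin q) (Fin q) ℝ)
    (hΛ : ∀ i j, 0 < A i j →
      (∀ k, Λt i j k k + ∑ k' ∈ Finset.univ.erase k, |Λt i j k k'| ≤ 0) ∧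
      ∃ Y : Matrix (Fin q) (Fin d) ℝ,
        Matrix.vecMulVec (Bm.mulVec (fun k => Γ k j)) (Pi.single i 1)
          = Λt i j * Bm + Y * D.transpose) :
    ∀ R, IsAdmissible A R → ∀ x : Fin n → ℝ, (∀ i, 0 ≤ x i) →
      (Filter.limsup (fun h : ℝ =>
          (sSup {a : ℝ | ∃ z : Fin n → ℝ, (∃ r : Fin ν → ℝ, Γ.mulVec r = z) ∧
              ‖Bm.mulVec z‖ ≤ 1 ∧
              a = ‖Bm.mulVec ((1 + h • (Γ * Matrix.of fun (j : Fin ν) (i : Fin n) =>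
                pd R x j i)).mulVec z)‖} - 1) / h)
          (nhdsWithin 0 (Set.Ioi 0)) ≤ 0)
      ∧ ∀ h : ℝ, 0 ≤ h → ∀ z : Fin n → ℝ, (∃ r : Fin ν → ℝ, Γ.mulVec r = z) →
          ‖Bm.mulVec ((1 + h • (Γ * Matrix.of fun (j : Fin ν) (i : Fin n) =>
              pd R x j i)).mulVec z)‖ ≤
            opNormInf (1 + h • ∑ i : Fin n, ∑ j : Fin ν,
              (if 0 < A i j then pd R x j i • Λt i j else 0)) * ‖Bm.mulVec z‖ := by
  intro R hR x hx
  set P : Matrix (Fin ν) (Fin n) ℝ :=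
    Matrix.of (fun (j : Fin ν) (i : Fin n) => pd R x j i) with hP
  set M : Matrix (Fin q) (Fin q) ℝ :=
    ∑ i : Fin n, ∑ j : Fin ν, (if 0 < A i j then pd R x j i • Λt i j else 0) with hM
  set ρ : Fin n → Fin ν → ℝ := fun i j => if 0 < A i j then pd R x j i else 0 with hρdef
  have hρ0 : ∀ i j, 0 ≤ ρ i j := by
    intro i j; by_cases hij : 0 < A i j
    · simpa [hρdef, hij] using hR.deriv_nonneg x hx i j hij
    · simp [hρdef, hij]
  have hpd0 : ∀ i j, ¬ 0 < A i j → pd R x j i = 0 := fun i j hij =>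
    hR.deriv_zero x hx i j (Nat.eq_zero_of_not_pos hij)
  have hMρ : M = ∑ i, ∑ j, ρ i j • Λt i j := by
    rw [hM]
    refine Finset.sum_congr rfl fun i _ => Finset.sum_congr rfl fun j _ => ?_
    by_cases hij : 0 < A i j <;> simp [hρdef, hij]
  -- D^T kills im Γ
  have hDz : ∀ r : Fin ν → ℝ, D.transpose.mulVec (Γ.mulVec r) = 0 := by
    intro r
    rw [Matrix.mulVec_mulVec]
    have hDΓ : D.transpose * Γ = 0 := by
      ext k j
      have hk : (fun i : Fin n => D i k) ∈ LinearMap.ker (Matrix.mulVecLin Γ.transpose) := by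
        rw [← hD2]; exact Submodule.subset_span ⟨k, rfl⟩
      have hk' : Γ.transpose.mulVec (fun i => D i k) = 0 := hk
      have hj := congrFun hk' j
      simp only [Matrix.mulVec, dotProduct, Matrix.transpose_apply, Pi.zero_apply] at hj
      simp only [Matrix.mul_apply, Matrix.zero_apply, Matrix.transpose_apply]
      rw [← hj]
      exact Finset.sum_congr rfl fun i _ => mul_comm _ _
    rw [hDΓ, Matrix.zero_mulVec]
  -- key identity
  have key : ∀ z : Fin n → ℝ, (∃ r, Γ.mulVec r = z) →
      Bm.mulVec ((Γ * P).mulVec z) = M.mulVec (Bm.mulVec z) := by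
    rintro z ⟨r, hr⟩
    have hGP : Γ * P = ∑ i : Fin n, ∑ j : Fin ν,
        pd R x j i • Matrix.vecMulVec (fun a => Γ a j) (Pi.single i 1) := by
      ext a b
      simp only [Matrix.mul_apply, Matrix.sum_apply, Matrix.smul_apply,
        Matrix.vecMulVec_apply, smul_eq_mul, Pi.single_apply, Matrix.of_apply, hP]
      rw [Finset.sum_comm]
      simp only [mul_ite, mul_one, mul_zero, Finset.sum_ite_eq, Finset.mem_univ, if_true]
      exact Finset.sum_congr rfl fun j _ => mul_comm _ _
    have hY : ∀ i j, ∃ Y : Matrix (Fin q) (Fin d) ℝ, 0 < A i j →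
        Matrix.vecMulVec (Bm.mulVec (fun k => Γ k j)) (Pi.single i 1)
          = Λt i j * Bm + Y * D.transpose := by
      intro i j
      by_cases h' : 0 < A i j
      · exact ⟨(hΛ i j h').2.choose, fun _ => (hΛ i j h').2.choose_spec⟩
      · exact ⟨0, fun h'' => absurd h'' h'⟩
    choose Y hYs using hY
    have hBGP : Bm * (Γ * P) = ∑ i : Fin n, ∑ j : Fin ν,
        (if 0 < A i j then
          pd R x j i • (Λt i j * Bm + Y i j * D.transpose) else 0) := by
      rw [hGP, Matrix.mul_sum]
      refine Finset.sum_congr rfl fun i _ => ?_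
      rw [Matrix.mul_sum]
      refine Finset.sum_congr rfl fun j _ => ?_
      rw [Matrix.mul_smul, mul_vecMulVec']
      by_cases h' : 0 < A i j
      · rw [if_pos h', hYs i j h']
      · rw [if_neg h', hpd0 i j h']
        simp
    have hDz' : D.transpose.mulVec z = 0 := by rw [← hr]; exact hDz r
    rw [Matrix.mulVec_mulVec, hBGP, sum_mulVec']
    rw [hMρ, sum_mulVec']
    refine Finset.sum_congr rfl fun i _ => ?_
    rw [sum_mulVec', sum_mulVec']
    refine Finset.sum_congr rfl fun j _ => ?_
    by_cases h' : 0 < A i j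
    · rw [if_pos h', Matrix.smul_mulVec, Matrix.add_mulVec,
        ← Matrix.mulVec_mulVec, ← Matrix.mulVec_mulVec, hDz', Matrix.mulVec_zero, add_zero,
        Matrix.smul_mulVec]
      simp [hρdef, h']
    · rw [if_neg h']
      simp [hρdef, h']
  have key2 : ∀ h : ℝ, ∀ z : Fin n → ℝ, (∃ r, Γ.mulVec r = z) →
      Bm.mulVec ((1 + h • (Γ * P)).mulVec z) = (1 + h • M).mulVec (Bm.mulVec z) := by
    intro h z hz
    rw [Matrix.add_mulVec, Matrix.one_mulVec, Matrix.smul_mulVec, Matrix.mulVec_add,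
      Matrix.mulVec_smul, key z hz, Matrix.add_mulVec, Matrix.one_mulVec,
      Matrix.smul_mulVec]
  -- entries of M
  have hMapp : ∀ k k', M k k' = ∑ i, ∑ j, ρ i j * Λt i j k k' := by
    intro k k'
    rw [hMρ]
    simp [Matrix.sum_apply, Matrix.smul_apply, smul_eq_mul]
  -- row-sum condition on M
  have hrowM : ∀ k, M k k + ∑ k' ∈ Finset.univ.erase k, |M k k'| ≤ 0 := by
    intro k
    have habs : ∀ k' : Fin q, |M k k'| ≤ ∑ i, ∑ j, ρ i j * |Λt i j k k'| := by
      intro k'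
      rw [hMapp]
      calc |∑ i, ∑ j, ρ i j * Λt i j k k'| ≤ ∑ i, |∑ j, ρ i j * Λt i j k k'| :=
            Finset.abs_sum_le_sum_abs _ _
        _ ≤ ∑ i, ∑ j, |ρ i j * Λt i j k k'| :=
            Finset.sum_le_sum fun i _ => Finset.abs_sum_le_sum_abs _ _
        _ = ∑ i, ∑ j, ρ i j * |Λt i j k k'| := by
            refine Finset.sum_congr rfl fun i _ => Finset.sum_congr rfl fun j _ => ?_
            rw [abs_mul, abs_of_nonneg (hρ0 i j)]
    have h1 : ∑ k' ∈ Finset.univ.erase k, |M k k'| ≤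
        ∑ i, ∑ j, ρ i j * ∑ k' ∈ Finset.univ.erase k, |Λt i j k k'| := by
      calc ∑ k' ∈ Finset.univ.erase k, |M k k'|
          ≤ ∑ k' ∈ Finset.univ.erase k, ∑ i, ∑ j, ρ i j * |Λt i j k k'| :=
            Finset.sum_le_sum fun k' _ => habs k'
        _ = ∑ i, ∑ k' ∈ Finset.univ.erase k, ∑ j, ρ i j * |Λt i j k k'| :=
            Finset.sum_comm
        _ = ∑ i, ∑ j, ∑ k' ∈ Finset.univ.erase k, ρ i j * |Λt i j k k'| :=
            Finset.sum_congr rfl fun i _ => Finset.sum_comm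
        _ = ∑ i, ∑ j, ρ i j * ∑ k' ∈ Finset.univ.erase k, |Λt i j k k'| :=
            Finset.sum_congr rfl fun i _ => Finset.sum_congr rfl fun j _ =>
              (Finset.mul_sum _ _ _).symm
    calc M k k + ∑ k' ∈ Finset.univ.erase k, |M k k'|
        ≤ (∑ i, ∑ j, ρ i j * Λt i j k k)
          + ∑ i, ∑ j, ρ i j * ∑ k' ∈ Finset.univ.erase k, |Λt i j k k'| := by
          rw [← hMapp]; exact add_le_add_right h1 _
      _ = ∑ i, ∑ j, ρ i j * (Λt i j k k + ∑ k' ∈ Finset.univ.erase k, |Λt i j k k'|) := by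
          rw [← Finset.sum_add_distrib]
          refine Finset.sum_congr rfl fun i _ => ?_
          rw [← Finset.sum_add_distrib]
          exact Finset.sum_congr rfl fun j _ => (mul_add _ _ _).symm
      _ ≤ 0 := by
          refine Finset.sum_nonpos fun i _ => Finset.sum_nonpos fun j _ => ?_
          by_cases h' : 0 < A i j
          · exact mul_nonpos_iff.mpr (Or.inl ⟨hρ0 i j, (hΛ i j h').1 k⟩)
          · simp [hρdef, h']
  -- row sums of 1 + h • M for small nonneg h
  have hone : ∀ h : ℝ, 0 ≤ h → (∀ k, 0 ≤ 1 + h * M k k) →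
      ∀ k, ∑ j, |(1 + h • M) k j| ≤ 1 := by
    intro h h0 hdiag k
    have hsplit : ∑ j, |(1 + h • M) k j|
        = |(1 + h • M) k k| + ∑ j ∈ Finset.univ.erase k, |(1 + h • M) k j| :=
      (Finset.add_sum_erase _ _ (Finset.mem_univ k)).symm
    have hdd : (1 + h • M) k k = 1 + h * M k k := by
      simp [Matrix.add_apply, Matrix.one_apply, Matrix.smul_apply, smul_eq_mul]
    have hoff : ∀ j ∈ Finset.univ.erase k, |(1 + h • M) k j| = h * |M k j| := by
      intro j hj
      have hjk : j ≠ k := Finset.ne_of_mem_erase hj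
      have : (1 + h • M) k j = h * M k j := by
        simp [Matrix.add_apply, Matrix.one_apply, Matrix.smul_apply, smul_eq_mul,
          (Ne.symm hjk)]
      rw [this, abs_mul, abs_of_nonneg h0]
    calc ∑ j, |(1 + h • M) k j|
        = |1 + h * M k k| + ∑ j ∈ Finset.univ.erase k, h * |M k j| := by
          rw [hsplit, hdd, Finset.sum_congr rfl hoff]
      _ = 1 + h * M k k + h * ∑ j ∈ Finset.univ.erase k, |M k j| := by
          rw [abs_of_nonneg (hdiag k), Finset.mul_sum]
      _ = 1 + h * (M k k + ∑ j ∈ Finset.univ.erase k, |M k j|) := by ring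
      _ ≤ 1 + h * 0 := by
          have := mul_le_mul_of_nonneg_left (hrowM k) h0
          linarith
      _ = 1 := by ring
  constructor
  · -- limsup part
    set c : ℝ := 1 + ∑ k, |M k k| with hcdef
    have hc : 0 < c := by
      have : 0 ≤ ∑ k, |M k k| := Finset.sum_nonneg fun k _ => abs_nonneg _
      linarith
    have hev : ∀ᶠ h : ℝ in nhdsWithin 0 (Set.Ioi 0),
        (sSup {a : ℝ | ∃ z : Fin n → ℝ, (∃ r : Fin ν → ℝ, Γ.mulVec r = z) ∧
            ‖Bm.mulVec z‖ ≤ 1 ∧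
            a = ‖Bm.mulVec ((1 + h • (Γ * P)).mulVec z)‖} - 1) / h ≤ 0 := by
      filter_upwards [Ioo_mem_nhdsGT_of_mem
        (show (0:ℝ) ∈ Set.Ico 0 c⁻¹ from ⟨le_refl 0, inv_pos.mpr hc⟩)] with h hh
      obtain ⟨hh0, hhc⟩ := hh
      have hdiag : ∀ k, 0 ≤ 1 + h * M k k := by
        intro k
        have h1 : |M k k| ≤ c := by
          have : |M k k| ≤ ∑ k', |M k' k'| :=
            Finset.single_le_sum (f := fun k' => |M k' k'|)
              (fun k' _ => abs_nonneg _) (Finset.mem_univ k)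
          linarith
        have h2 : h * |M k k| ≤ 1 := by
          calc h * |M k k| ≤ c⁻¹ * c :=
                mul_le_mul hhc.le h1 (abs_nonneg _) (inv_pos.mpr hc).le
            _ = 1 := inv_mul_cancel₀ hc.ne'
        have h3 : -(h * M k k) ≤ 1 := by
          calc -(h * M k k) ≤ |h * M k k| := neg_le_abs _
            _ = h * |M k k| := by rw [abs_mul, abs_of_nonneg hh0.le]
            _ ≤ 1 := h2
        linarith
      have hsup : sSup {a : ℝ | ∃ z : Fin n → ℝ, (∃ r : Fin ν → ℝ, Γ.mulVec r = z) ∧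
          ‖Bm.mulVec z‖ ≤ 1 ∧
          a = ‖Bm.mulVec ((1 + h • (Γ * P)).mulVec z)‖} ≤ 1 := by
        refine Real.sSup_le ?_ zero_le_one
        rintro a ⟨z, hz, hBz, rfl⟩
        rw [key2 h z hz]
        calc ‖(1 + h • M).mulVec (Bm.mulVec z)‖ ≤ 1 * ‖Bm.mulVec z‖ :=
              rowsum_mulVec_le _ 1 zero_le_one (hone h hh0.le hdiag) _
          _ ≤ 1 := by rw [one_mul]; exact hBz
      exact div_nonpos_iff.mpr (Or.inr ⟨sub_nonpos.mpr hsup, hh0.le⟩)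
    rw [Filter.limsup_eq]
    by_cases hbb : BddBelow {a : ℝ | ∀ᶠ h : ℝ in nhdsWithin 0 (Set.Ioi 0),
        (sSup {a : ℝ | ∃ z : Fin n → ℝ, (∃ r : Fin ν → ℝ, Γ.mulVec r = z) ∧
            ‖Bm.mulVec z‖ ≤ 1 ∧
            a = ‖Bm.mulVec ((1 + h • (Γ * P)).mulVec z)‖} - 1) / h ≤ a}
    · exact csInf_le hbb hev
    · rw [Real.sInf_of_not_bddBelow hbb]
  · -- explicit bound
    intro h _ z hz
    rw [key2 h z hz]
    exact mulVec_le_opNormInf _ _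
end
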